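/- arXiv:2410.21138 — 11 statements merged into one kernel-verified Lean document; each statement's English description precedes it below -/
import Mathlib

section
/- Assume moreover that 2p ≤ n−2 and that there exists ε ∈ (0,R] with ψ(r) > 0 for all r ∈ (0,ε). Then ψ(r) > 0 and ψ'(r) > 0 for all r ∈ (0,R]. -/
open MeasureTheory Set

/-- If ψ is positive near 0, then ψ and ψ' are positive on all of (0,R] (case 2p ≤ n-2). -/
theorem stmt_1
    (n p m : ℤ) (hn : 3 ≤ n) (hp : 1 ≤ p) (hm : 1 ≤ m)
    (R : ℝ) (hR : 0 < R)
    (h h' h'' ψ ψ' ψ'' : ℝ → ℝ)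
    (hder1 : ∀ r ∈ Set.Icc (0:ℝ) R, HasDerivWithinAt h (h' r) (Set.Icc 0 R) r)
    (hder2 : ∀ r ∈ Set.Icc (0:ℝ) R, HasDerivWithinAt h' (h'' r) (Set.Icc 0 R) r)
    (hcont2 : ContinuousOn h'' (Set.Icc 0 R))
    (pder1 : ∀ r ∈ Set.Icc (0:ℝ) R, HasDerivWithinAt ψ (ψ' r) (Set.Icc 0 R) r)
    (pder2 : ∀ r ∈ Set.Icc (0:ℝ) R, HasDerivWithinAt ψ' (ψ'' r) (Set.Icc 0 R) r)
    (pcont2 : ContinuousOn ψ'' (Set.Icc 0 R))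
    (h0 : h 0 = 0) (h'0 : h' 0 = 1)
    (hpos : ∀ r ∈ Set.Ioc (0:ℝ) R, 0 < h r)
    (ψ0 : ψ 0 = 0)
    (ode : ∀ r ∈ Set.Ioc (0:ℝ) R,
      ψ'' r + ((n - 2 * p - 1 : ℤ) : ℝ) * (h' r / h r) * ψ' r
        - (((m + p) * (n + m - p - 2) : ℤ) : ℝ) * ψ r / (h r) ^ 2 = 0)
    (hp2 : 2 * p ≤ n - 2)
    (hposnear : ∃ ε, 0 < ε ∧ ε ≤ R ∧ ∀ r ∈ Set.Ioo (0:ℝ) ε, 0 < ψ r) :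
    ∀ r ∈ Set.Ioc (0:ℝ) R, 0 < ψ r ∧ 0 < ψ' r := by
  obtain ⟨ε, hε0, hεR, hψε⟩ := hposnear
  set k : ℕ := (n - 2 * p - 1).toNat with hkdef
  have hk1 : 1 ≤ k := by omega
  have hkcast : ((n - 2 * p - 1 : ℤ) : ℝ) = (k : ℝ) := by
    have : (n - 2 * p - 1 : ℤ) = (k : ℤ) := by omega
    exact_mod_cast this
  set L : ℝ := (((m + p) * (n + m - p - 2) : ℤ) : ℝ) with hLdef
  have hL : 0 < L := by
    have h1 : (0 : ℤ) < (m + p) * (n + m - p - 2) := by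
      have : (0:ℤ) < m + p := by omega
      have : (0:ℤ) < n + m - p - 2 := by omega
      positivity
    rw [hLdef]
    exact_mod_cast h1
  have hψcont : ContinuousOn ψ (Icc 0 R) := fun r hr => (pder1 r hr).continuousWithinAt
  have hψ'cont : ContinuousOn ψ' (Icc 0 R) := fun r hr => (pder2 r hr).continuousWithinAt
  have hhcont : ContinuousOn h (Icc 0 R) := fun r hr => (hder1 r hr).continuousWithinAt
  set g : ℝ → ℝ := fun r => h r ^ k * ψ' r with hgdef
  have hgcont : ContinuousOn g (Icc 0 R) := (hhcont.pow k).mul hψ'cont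
  -- derivative of g at interior points
  have gderiv : ∀ x ∈ Ioo (0:ℝ) R, HasDerivAt g (L * ψ x * h x ^ k / h x ^ 2) x := by
    intro x hx
    have hxI : x ∈ Icc (0:ℝ) R := ⟨hx.1.le, hx.2.le⟩
    have hnhds : Icc (0:ℝ) R ∈ nhds x := Icc_mem_nhds hx.1 hx.2
    have dh := (hder1 x hxI).hasDerivAt hnhds
    have dψ' := (pder2 x hxI).hasDerivAt hnhds
    have dg : HasDerivAt g ((↑k * h x ^ (k - 1) * h' x) * ψ' x + h x ^ k * ψ'' x) x :=
      (dh.pow k).mul dψ'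
    convert dg using 1
    have hhx : 0 < h x := hpos x ⟨hx.1, hx.2.le⟩
    have hne : h x ≠ 0 := hhx.ne'
    have hode := ode x ⟨hx.1, hx.2.le⟩
    rw [hkcast] at hode
    have hpow : h x ^ k = h x ^ (k - 1) * h x := by
      conv_lhs => rw [show k = (k - 1) + 1 by omega]
      rw [pow_succ]
    rw [hpow]
    field_simp at hode
    rw [div_eq_iff (pow_ne_zero 2 hne)]
    linear_combination (-(h x ^ (k - 1) * h x)) * hode
  -- ψ' derivative at interior points
  have ψderiv : ∀ x ∈ Ioo (0:ℝ) R, HasDerivAt ψ (ψ' x) x := fun x hx =>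
    (pder1 x ⟨hx.1.le, hx.2.le⟩).hasDerivAt (Icc_mem_nhds hx.1 hx.2)
  -- find points with positive derivative arbitrarily close to 0
  have getξ : ∀ b, 0 < b → b < ε → ∃ ξ, ξ ∈ Ioo 0 b ∧ 0 < ψ' ξ ∧ 0 < ψ ξ := by
    intro b hb hbε
    have hbR : b ≤ R := le_trans hbε.le hεR
    have hIcc : Icc (0:ℝ) b ⊆ Icc 0 R := Icc_subset_Icc le_rfl hbR
    obtain ⟨ξ, hξ, hslope⟩ := exists_hasDerivAt_eq_slope ψ ψ' hb (hψcont.mono hIcc)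
      (fun x hx => ψderiv x ⟨hx.1, lt_of_lt_of_le hx.2 hbR⟩)
    refine ⟨ξ, hξ, ?_, hψε ξ ⟨hξ.1, hξ.2.trans hbε⟩⟩
    rw [hslope, ψ0, sub_zero, sub_zero]
    exact div_pos (hψε b ⟨hb, hbε⟩) hb
  -- g is strictly monotone on intervals where ψ > 0
  have gmono : ∀ a b : ℝ, 0 < a → b ≤ R → (∀ s ∈ Ioo a b, 0 < ψ s) →
      StrictMonoOn g (Icc a b) := by
    intro a b ha hbR hψab
    apply strictMonoOn_of_deriv_pos (convex_Icc a b)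
      (hgcont.mono (Icc_subset_Icc ha.le hbR))
    intro x hx
    rw [interior_Icc] at hx
    have hx' : x ∈ Ioo (0:ℝ) R := ⟨ha.trans hx.1, lt_of_lt_of_le hx.2 hbR⟩
    rw [(gderiv x hx').deriv]
    have hhx : 0 < h x := hpos x ⟨hx'.1, hx'.2.le⟩
    have := hψab x hx
    positivity
  -- main claim: ψ > 0 on (0, R]
  have ψpos : ∀ r ∈ Ioc (0:ℝ) R, 0 < ψ r := by
    by_contra hcon
    push_neg at hcon
    obtain ⟨r, hr, hψr⟩ := hcon
    obtain ⟨ξ, hξ, hψ'ξ, hψξ⟩ := getξ (ε / 2) (by linarith) (by linarith)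
    have hξε : ξ < ε := hξ.2.trans (by linarith)
    have hξr : ξ ≤ r := by
      by_contra hlt
      push_neg at hlt
      exact absurd (hψε r ⟨hr.1, hlt.trans hξε⟩) (not_lt.2 hψr)
    set Z : Set ℝ := {s | s ∈ Icc ξ R ∧ ψ s ≤ 0} with hZdef
    have hZclosed : IsClosed Z := by
      have : Z = Icc ξ R ∩ ψ ⁻¹' Iic 0 := rfl
      rw [this]
      exact (hψcont.mono (Icc_subset_Icc hξ.1.le le_rfl)).preimage_isClosed_of_isClosed
        isClosed_Icc isClosed_Iic
    have hZcpct : IsCompact Z := isCompact_Icc.of_isClosed_subset hZclosed (fun s hs => hs.1)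
    have hZne : Z.Nonempty := ⟨r, ⟨hξr, hr.2⟩, hψr⟩
    set r₀ := sInf Z with hr₀def
    have hr₀Z : r₀ ∈ Z := hZcpct.sInf_mem hZne
    have hr₀le : ∀ s ∈ Z, r₀ ≤ s := fun s hs => csInf_le hZcpct.bddBelow hs
    have hξr₀ : ξ < r₀ := by
      rcases lt_or_eq_of_le hr₀Z.1.1 with hlt | heq
      · exact hlt
      · exact absurd (heq ▸ hr₀Z.2) (not_le.2 hψξ)
    have hr₀R : r₀ ≤ R := hr₀Z.1.2
    have hψmid : ∀ s ∈ Ioo ξ r₀, 0 < ψ s := by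
      intro s hs
      by_contra hns
      push_neg at hns
      exact absurd (hr₀le s ⟨⟨hs.1.le, hs.2.le.trans hr₀R⟩, hns⟩) (not_le.2 hs.2)
    have hgm := gmono ξ r₀ hξ.1 hr₀R hψmid
    have hgξ : 0 < g ξ := by
      have hhξ : 0 < h ξ := hpos ξ ⟨hξ.1, (hξε.le.trans hεR)⟩
      simp only [hgdef]
      positivity
    -- ψ' > 0 on interior, so ψ strictly increasing on [ξ, r₀]
    have hψmono : StrictMonoOn ψ (Icc ξ r₀) := by
      apply strictMonoOn_of_deriv_pos (convex_Icc ξ r₀)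
        (hψcont.mono (Icc_subset_Icc hξ.1.le hr₀R))
      intro x hx
      rw [interior_Icc] at hx
      have hx' : x ∈ Ioo (0:ℝ) R := ⟨hξ.1.trans hx.1, lt_of_lt_of_le hx.2 hr₀R⟩
      rw [(ψderiv x hx').deriv]
      have hgx : g ξ < g x := hgm (left_mem_Icc.2 (hξr₀.le)) ⟨hx.1.le, hx.2.le⟩ hx.1
      have hhx : 0 < h x := hpos x ⟨hx'.1, hx'.2.le⟩
      have hgxpos : 0 < h x ^ k * ψ' x := lt_trans hgξ hgx
      by_contra hns
      push_neg at hns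
      nlinarith [pow_pos hhx k]
    have : ψ ξ < ψ r₀ := hψmono (left_mem_Icc.2 hξr₀.le) (right_mem_Icc.2 hξr₀.le) hξr₀
    linarith [hr₀Z.2]
  -- finish: ψ' > 0
  intro r hr
  refine ⟨ψpos r hr, ?_⟩
  have hminpos : 0 < min r ε := lt_min hr.1 hε0
  obtain ⟨ξ, hξ, hψ'ξ, hψξ⟩ := getξ (min r ε / 2) (by positivity) (by
    have := min_le_right r ε
    linarith)
  have hξr : ξ < r := by
    have h2 : min r ε ≤ r := min_le_left r ε
    have h1 : ξ < min r ε / 2 := hξ.2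
    linarith
  have hgm := gmono ξ r hξ.1 hr.2 (fun s hs => ψpos s ⟨hξ.1.trans hs.1, hs.2.le.trans hr.2⟩)
  have hgξ : 0 < g ξ := by
    have hhξ : 0 < h ξ := hpos ξ ⟨hξ.1, by
      have h1 : ξ < min r ε / 2 := hξ.2
      have := min_le_right r ε
      linarith⟩
    simp only [hgdef]
    positivity
  have hgr : g ξ < g r := hgm ⟨le_rfl, hξr.le⟩ ⟨hξr.le, le_rfl⟩ hξr
  have hhr : 0 < h r := hpos r hr
  have hgrpos : 0 < h r ^ k * ψ' r := lt_trans hgξ hgr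
  by_contra hns
  push_neg at hns
  nlinarith [pow_pos hhr k]
end

section
/- Assume moreover that 2p ≤ n−1. Then ψ'(0) = 0. -/
open MeasureTheory Set Filter Topology

/-- For 2p ≤ n-1 one has ψ'(0) = 0. -/
theorem stmt_2
    (n p m : ℤ) (hn : 3 ≤ n) (hp : 1 ≤ p) (hm : 1 ≤ m)
    (R : ℝ) (hR : 0 < R)
    (h h' h'' ψ ψ' ψ'' : ℝ → ℝ)
    (hder1 : ∀ r ∈ Set.Icc (0:ℝ) R, HasDerivWithinAt h (h' r) (Set.Icc 0 R) r)
    (hder2 : ∀ r ∈ Set.Icc (0:ℝ) R, HasDerivWithinAt h' (h'' r) (Set.Icc 0 R) r)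
    (hcont2 : ContinuousOn h'' (Set.Icc 0 R))
    (pder1 : ∀ r ∈ Set.Icc (0:ℝ) R, HasDerivWithinAt ψ (ψ' r) (Set.Icc 0 R) r)
    (pder2 : ∀ r ∈ Set.Icc (0:ℝ) R, HasDerivWithinAt ψ' (ψ'' r) (Set.Icc 0 R) r)
    (pcont2 : ContinuousOn ψ'' (Set.Icc 0 R))
    (h0 : h 0 = 0) (h'0 : h' 0 = 1)
    (hpos : ∀ r ∈ Set.Ioc (0:ℝ) R, 0 < h r)
    (ψ0 : ψ 0 = 0)
    (ode : ∀ r ∈ Set.Ioc (0:ℝ) R,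
      ψ'' r + ((n - 2 * p - 1 : ℤ) : ℝ) * (h' r / h r) * ψ' r
        - (((m + p) * (n + m - p - 2) : ℤ) : ℝ) * ψ r / (h r) ^ 2 = 0)
    (hp2 : 2 * p ≤ n - 1) :
    ψ' 0 = 0 := by
  set c : ℝ := ((n - 2 * p - 1 : ℤ) : ℝ) with hc
  set lam : ℝ := (((m + p) * (n + m - p - 2) : ℤ) : ℝ) with hlam
  set a : ℝ := ψ' 0 with ha
  set L : Filter ℝ := nhdsWithin 0 (Set.Ioc 0 R) with hL
  have h0mem : (0:ℝ) ∈ Set.Icc 0 R := ⟨le_refl _, hR.le⟩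
  have hsub : Set.Ioc (0:ℝ) R ⊆ Set.Icc 0 R \ {0} := by
    intro x hx
    exact ⟨⟨hx.1.le, hx.2⟩, ne_of_gt hx.1⟩
  have hLle : L ≤ nhdsWithin 0 (Set.Icc 0 R \ {0}) := nhdsWithin_mono _ hsub
  have hLle' : L ≤ nhdsWithin 0 (Set.Icc 0 R) :=
    nhdsWithin_mono _ (fun x hx => ⟨hx.1.le, hx.2⟩)
  haveI : L.NeBot := by
    rw [hL]
    refine mem_closure_iff_nhdsWithin_neBot.mp ?_
    rw [closure_Ioc hR.ne]
    exact h0mem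
  have hIocL : Set.Ioc (0:ℝ) R ∈ L := self_mem_nhdsWithin
  -- h r / r → 1
  have hslope : Filter.Tendsto (fun r => h r / r) L (nhds 1) := by
    have := (hasDerivWithinAt_iff_tendsto_slope.mp (hder1 0 h0mem)).mono_left hLle
    rw [h'0] at this
    refine this.congr' ?_
    filter_upwards [hIocL] with r hr
    simp [slope_def_field, h0]
  -- ψ r / r → a
  have pslope : Filter.Tendsto (fun r => ψ r / r) L (nhds a) := by
    have := (hasDerivWithinAt_iff_tendsto_slope.mp (pder1 0 h0mem)).mono_left hLle
    refine this.congr' ?_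
    filter_upwards [hIocL] with r hr
    simp [slope_def_field, ψ0]
  -- r / h r → 1
  have hinv : Filter.Tendsto (fun r => r / h r) L (nhds 1) := by
    have := hslope.inv₀ one_ne_zero
    rw [inv_one] at this
    refine this.congr' ?_
    filter_upwards [hIocL] with r hr
    rw [inv_div]
  -- h' → 1
  have hh' : Filter.Tendsto h' L (nhds 1) := by
    have := ((hder2 0 h0mem).continuousWithinAt).mono_left hLle'
    unfold ContinuousWithinAt at this
    rwa [h'0] at this
  -- ψ' → a
  have hψ' : Filter.Tendsto ψ' L (nhds a) :=
    ((pder2 0 h0mem).continuousWithinAt).mono_left hLle'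
  -- ψ'' → ψ'' 0
  have hψ'' : Filter.Tendsto ψ'' L (nhds (ψ'' 0)) :=
    (pcont2 0 h0mem).mono_left hLle'
  -- r → 0
  have hid : Filter.Tendsto (fun r : ℝ => r) L (nhds 0) :=
    tendsto_id.mono_left nhdsWithin_le_nhds
  have T1 : Filter.Tendsto (fun r => r * ψ'' r) L (nhds 0) := by
    have := hid.mul hψ''
    rwa [zero_mul] at this
  have T2 : Filter.Tendsto (fun r => r * ψ'' r) L (nhds (-c * 1 * a * 1 + lam * a * 1 ^ 2)) := by
    have base : Filter.Tendsto
        (fun r => -c * h' r * ψ' r * (r / h r) + lam * (ψ r / r) * (r / h r) ^ 2) L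
        (nhds (-c * 1 * a * 1 + lam * a * 1 ^ 2)) := by
      exact ((((tendsto_const_nhds.mul hh').mul hψ').mul hinv).add
        (((tendsto_const_nhds.mul pslope).mul (hinv.pow 2))))
    refine base.congr' ?_
    filter_upwards [hIocL] with r hr
    have hrpos := hr.1
    have hhr := hpos r hr
    have hode := ode r hr
    have : ψ'' r = -c * (h' r / h r) * ψ' r + lam * ψ r / (h r) ^ 2 := by linarith
    rw [this]
    field_simp
  have key : -c * 1 * a * 1 + lam * a * 1 ^ 2 = 0 := tendsto_nhds_unique T2 T1
  have hlc : c < lam := by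
    rw [hc, hlam]
    have : (n - 2 * p - 1 : ℤ) < (m + p) * (n + m - p - 2) := by nlinarith
    exact_mod_cast this
  have : (lam - c) * a = 0 := by linarith [key]
  rcases mul_eq_zero.mp this with h1 | h1
  · linarith
  · exact h1
end

section
/- Assume moreover that 2p ≤ n−1, that h''(r) ≤ 0 and 0 < h'(r) ≤ 1 for all r ∈ [0,R], and that ψ(r) > 0 and ψ'(r) ≥ 0 for all r ∈ (0,R]. Define u : (0,R] → ℝ by u(r) := λ·ψ(r)/h(r) − (λ/(m+p))·h'(r)·ψ'(r). Then for every r ∈ (0,R] one has u(r) = h(r)·ψ''(r) + (1−m−p)·h'(r)·ψ'(r), u is differentiable on (0,R], and u'(r) ≥ −( (m+p)/(h(r)·h'(r)) + (n−2p−1)·h'(r)/h(r) )·u(r). -/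
open MeasureTheory Set

/-- Formula and differential inequality for the auxiliary function u. -/
theorem stmt_4
    (n p m : ℤ) (hn : 3 ≤ n) (hp : 1 ≤ p) (hm : 1 ≤ m)
    (R : ℝ) (hR : 0 < R)
    (h h' h'' ψ ψ' ψ'' : ℝ → ℝ)
    (hder1 : ∀ r ∈ Set.Icc (0:ℝ) R, HasDerivWithinAt h (h' r) (Set.Icc 0 R) r)
    (hder2 : ∀ r ∈ Set.Icc (0:ℝ) R, HasDerivWithinAt h' (h'' r) (Set.Icc 0 R) r)
    (hcont2 : ContinuousOn h'' (Set.Icc 0 R))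
    (pder1 : ∀ r ∈ Set.Icc (0:ℝ) R, HasDerivWithinAt ψ (ψ' r) (Set.Icc 0 R) r)
    (pder2 : ∀ r ∈ Set.Icc (0:ℝ) R, HasDerivWithinAt ψ' (ψ'' r) (Set.Icc 0 R) r)
    (pcont2 : ContinuousOn ψ'' (Set.Icc 0 R))
    (h0 : h 0 = 0) (h'0 : h' 0 = 1)
    (hpos : ∀ r ∈ Set.Ioc (0:ℝ) R, 0 < h r)
    (ψ0 : ψ 0 = 0)
    (ode : ∀ r ∈ Set.Ioc (0:ℝ) R,
      ψ'' r + ((n - 2 * p - 1 : ℤ) : ℝ) * (h' r / h r) * ψ' r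
        - (((m + p) * (n + m - p - 2) : ℤ) : ℝ) * ψ r / (h r) ^ 2 = 0)
    (hp2 : 2 * p ≤ n - 1)
    (hconc : ∀ r ∈ Set.Icc (0:ℝ) R, h'' r ≤ 0)
    (hslope : ∀ r ∈ Set.Icc (0:ℝ) R, 0 < h' r ∧ h' r ≤ 1)
    (ψpos : ∀ r ∈ Set.Ioc (0:ℝ) R, 0 < ψ r ∧ 0 ≤ ψ' r)
    (u : ℝ → ℝ)
    (hu : ∀ r ∈ Set.Ioc (0:ℝ) R,
      u r = (((m + p) * (n + m - p - 2) : ℤ) : ℝ) * ψ r / h r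
        - ((((m + p) * (n + m - p - 2) : ℤ) : ℝ) / ((m : ℝ) + p)) * h' r * ψ' r) :
    (∀ r ∈ Set.Ioc (0:ℝ) R,
        u r = h r * ψ'' r + (1 - (m : ℝ) - p) * h' r * ψ' r) ∧
    ∃ u' : ℝ → ℝ,
      (∀ r ∈ Set.Ioc (0:ℝ) R, HasDerivWithinAt u (u' r) (Set.Ioc 0 R) r) ∧
      ∀ r ∈ Set.Ioc (0:ℝ) R,
        u' r ≥ -(((m : ℝ) + p) / (h r * h' r)
            + ((n : ℝ) - 2 * p - 1) * h' r / h r) * u r := by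
  have hm1 : (1:ℝ) ≤ (m:ℝ) := by exact_mod_cast hm
  have hp1 : (1:ℝ) ≤ (p:ℝ) := by exact_mod_cast hp
  have hq : (0:ℝ) < (m:ℝ) + p := by linarith
  have hc : (0:ℝ) ≤ (n:ℝ) - 2 * p - 1 := by
    have : ((2*p : ℤ):ℝ) ≤ ((n-1 : ℤ):ℝ) := by exact_mod_cast hp2
    push_cast at this; linarith
  have hμ : (1:ℝ) ≤ (n:ℝ) + m - p - 2 := by linarith
  -- rearranged ODE
  have hψ'' : ∀ r ∈ Set.Ioc (0:ℝ) R,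
      ψ'' r = (((m + p) * (n + m - p - 2) : ℤ) : ℝ) * ψ r / (h r) ^ 2
        - ((n - 2 * p - 1 : ℤ) : ℝ) * (h' r / h r) * ψ' r := by
    intro r hr
    have := ode r hr
    linarith
  constructor
  · intro r hr
    have hhr : (0:ℝ) < h r := hpos r hr
    have hne : h r ≠ 0 := ne_of_gt hhr
    rw [hu r hr, hψ'' r hr]
    push_cast
    field_simp
    ring
  · refine ⟨fun r =>
      ((((m + p) * (n + m - p - 2) : ℤ) : ℝ) * ψ' r * h r
        - (((m + p) * (n + m - p - 2) : ℤ) : ℝ) * ψ r * h' r) / (h r) ^ 2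
      - ((((m + p) * (n + m - p - 2) : ℤ) : ℝ) / ((m : ℝ) + p))
          * (h'' r * ψ' r + h' r * ψ'' r), ?_, ?_⟩
    · intro r hr
      have hr' : r ∈ Set.Icc (0:ℝ) R := ⟨le_of_lt hr.1, hr.2⟩
      have hsub : Set.Ioc (0:ℝ) R ⊆ Set.Icc (0:ℝ) R := Set.Ioc_subset_Icc_self
      have hne : h r ≠ 0 := ne_of_gt (hpos r hr)
      have Hh := (hder1 r hr').mono hsub
      have Hh' := (hder2 r hr').mono hsub
      have Hψ := (pder1 r hr').mono hsub
      have Hψ' := (pder2 r hr').mono hsub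
      have H1 := ((Hψ.const_mul ((((m + p) * (n + m - p - 2) : ℤ) : ℝ))).div Hh hne)
      have H2 := (Hh'.mul Hψ').const_mul
          ((((m + p) * (n + m - p - 2) : ℤ) : ℝ) / ((m : ℝ) + p))
      have Hsum := H1.sub H2
      have Heq := Hsum.congr (fun y hy => (hu y hy).trans (by simp only [Pi.div_apply, Pi.sub_apply, Pi.mul_apply]; ring)) ((hu r hr).trans (by simp only [Pi.div_apply, Pi.sub_apply, Pi.mul_apply]; ring))
      convert Heq using 1
    · intro r hr
      have hr' : r ∈ Set.Icc (0:ℝ) R := ⟨le_of_lt hr.1, hr.2⟩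
      have hhr : (0:ℝ) < h r := hpos r hr
      have hh'r : 0 < h' r := (hslope r hr').1
      have hh'le : h' r ≤ 1 := (hslope r hr').2
      have hψr : 0 < ψ r := (ψpos r hr).1
      have hψ'r : 0 ≤ ψ' r := (ψpos r hr).2
      have hh''r : h'' r ≤ 0 := hconc r hr'
      have hne : h r ≠ 0 := ne_of_gt hhr
      have hne' : h' r ≠ 0 := ne_of_gt hh'r
      have key :
          (((((m + p) * (n + m - p - 2) : ℤ) : ℝ) * ψ' r * h r
            - (((m + p) * (n + m - p - 2) : ℤ) : ℝ) * ψ r * h' r) / (h r) ^ 2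
          - ((((m + p) * (n + m - p - 2) : ℤ) : ℝ) / ((m : ℝ) + p))
              * (h'' r * ψ' r + h' r * ψ'' r))
          + (((m : ℝ) + p) / (h r * h' r)
              + ((n : ℝ) - 2 * p - 1) * h' r / h r) * u r
          = ((n:ℝ) + m - p - 2) * (-(h'' r)) * ψ' r
            + ((m:ℝ) + p) * (((m:ℝ) + p) * ((n:ℝ) + m - p - 2)) * ψ r
                * (1 - (h' r)^2) / ((h r)^2 * h' r) := by
        rw [hu r hr, hψ'' r hr]
        push_cast
        field_simp
        ring
      have pos1 : 0 ≤ ((n:ℝ) + m - p - 2) * (-(h'' r)) * ψ' r :=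
        mul_nonneg (mul_nonneg (by linarith) (by linarith)) hψ'r
      have pos2 : 0 ≤ ((m:ℝ) + p) * (((m:ℝ) + p) * ((n:ℝ) + m - p - 2)) * ψ r
            * (1 - (h' r)^2) / ((h r)^2 * h' r) := by
        apply div_nonneg
        · apply mul_nonneg
          · apply mul_nonneg (mul_nonneg (by linarith) (by nlinarith)) (le_of_lt hψr)
          · nlinarith
        · positivity
      nlinarith [key]
end

section
/- Assume moreover that 2p ≤ n−1, that h''(r) ≤ 0 and 0 < h'(r) ≤ 1 for all r ∈ [0,R], that ψ(r) > 0 and ψ'(r) ≥ 0 for all r ∈ (0,R], and that ψ'(0) = 0. Then for every r ∈ (0,R] one has (m+p)·ψ(r)/h(r) ≥ h'(r)·ψ'(r); equivalently, the quantity u(r) := λ·ψ(r)/h(r) − (λ/(m+p))·h'(r)·ψ'(r) is nonnegative on (0,R]. -/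
open MeasureTheory Set

/-- Nonnegativity of the auxiliary quantity: (m+p)ψ/h ≥ h'ψ' on (0,R]. -/
theorem stmt_5
    (n p m : ℤ) (hn : 3 ≤ n) (hp : 1 ≤ p) (hm : 1 ≤ m)
    (R : ℝ) (hR : 0 < R)
    (h h' h'' ψ ψ' ψ'' : ℝ → ℝ)
    (hder1 : ∀ r ∈ Set.Icc (0:ℝ) R, HasDerivWithinAt h (h' r) (Set.Icc 0 R) r)
    (hder2 : ∀ r ∈ Set.Icc (0:ℝ) R, HasDerivWithinAt h' (h'' r) (Set.Icc 0 R) r)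
    (hcont2 : ContinuousOn h'' (Set.Icc 0 R))
    (pder1 : ∀ r ∈ Set.Icc (0:ℝ) R, HasDerivWithinAt ψ (ψ' r) (Set.Icc 0 R) r)
    (pder2 : ∀ r ∈ Set.Icc (0:ℝ) R, HasDerivWithinAt ψ' (ψ'' r) (Set.Icc 0 R) r)
    (pcont2 : ContinuousOn ψ'' (Set.Icc 0 R))
    (h0 : h 0 = 0) (h'0 : h' 0 = 1)
    (hpos : ∀ r ∈ Set.Ioc (0:ℝ) R, 0 < h r)
    (ψ0 : ψ 0 = 0)
    (ode : ∀ r ∈ Set.Ioc (0:ℝ) R,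
      ψ'' r + ((n - 2 * p - 1 : ℤ) : ℝ) * (h' r / h r) * ψ' r
        - (((m + p) * (n + m - p - 2) : ℤ) : ℝ) * ψ r / (h r) ^ 2 = 0)
    (hp2 : 2 * p ≤ n - 1)
    (hconc : ∀ r ∈ Set.Icc (0:ℝ) R, h'' r ≤ 0)
    (hslope : ∀ r ∈ Set.Icc (0:ℝ) R, 0 < h' r ∧ h' r ≤ 1)
    (ψpos : ∀ r ∈ Set.Ioc (0:ℝ) R, 0 < ψ r ∧ 0 ≤ ψ' r)
    (ψ'0 : ψ' 0 = 0) :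
    ∀ r ∈ Set.Ioc (0:ℝ) R, ((m : ℝ) + p) * ψ r / h r ≥ h' r * ψ' r := by
  have hk1 : 1 ≤ n + m - p - 2 := by omega
  obtain ⟨K, hKeq⟩ : ∃ K : ℕ, (n + m - p - 2).toNat = K + 1 :=
    ⟨(n + m - p - 2).toNat - 1, by omega⟩
  have hkK : ((n + m - p - 2 : ℤ) : ℝ) = (K : ℝ) + 1 := by
    have : ((n + m - p - 2).toNat : ℤ) = n + m - p - 2 := Int.toNat_of_nonneg (by omega)
    rw [← this, hKeq]; push_cast; ring
  set F : ℝ → ℝ := fun r => ((m : ℝ) + p) * ψ r - h r * h' r * ψ' r with hFdef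
  set F' : ℝ → ℝ := fun r =>
    ((m : ℝ) + p) * ψ' r - ((h' r * h' r + h r * h'' r) * ψ' r + h r * h' r * ψ'' r) with hF'def
  set G : ℝ → ℝ := fun r => F r * (h r) ^ (K + 1) with hGdef
  set G' : ℝ → ℝ := fun r =>
    F' r * (h r) ^ (K + 1) + F r * (((K : ℝ) + 1) * (h r) ^ K * h' r) with hG'def
  -- derivative of G within Icc
  have hGder : ∀ r ∈ Set.Icc (0:ℝ) R, HasDerivWithinAt G (G' r) (Set.Icc 0 R) r := by
    intro r hr
    have hFder : HasDerivWithinAt F (F' r) (Set.Icc 0 R) r := by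
      have := (((pder1 r hr).const_mul ((m : ℝ) + p)).sub
        (((hder1 r hr).mul (hder2 r hr)).mul (pder2 r hr)))
      exact this
    have hpow : HasDerivWithinAt (fun x => (h x) ^ (K + 1))
        (((K : ℝ) + 1) * (h r) ^ K * h' r) (Set.Icc 0 R) r := by
      have := (hder1 r hr).pow (K + 1)
      simp at this
      exact this
    exact hFder.mul hpow
  -- G' is nonneg on the interior
  have hG'nonneg : ∀ r ∈ Set.Ioo (0:ℝ) R, 0 ≤ G' r := by
    intro r hr
    have hrIoc : r ∈ Set.Ioc (0:ℝ) R := ⟨hr.1, hr.2.le⟩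
    have hrIcc : r ∈ Set.Icc (0:ℝ) R := ⟨hr.1.le, hr.2.le⟩
    have hhr : 0 < h r := hpos r hrIoc
    have hne : h r ≠ 0 := ne_of_gt hhr
    have E := ode r hrIoc
    have Eψ : ψ'' r = (((m : ℝ) + p) * ((K : ℝ) + 1)) * ψ r / (h r) ^ 2
        - ((n : ℝ) - 2 * p - 1) * (h' r / h r) * ψ' r := by
      have : (((m + p) * (n + m - p - 2) : ℤ) : ℝ)
          = ((m : ℝ) + p) * ((K : ℝ) + 1) := by push_cast [← hkK]; push_cast; ring
      rw [← this]
      have : ((n - 2 * p - 1 : ℤ) : ℝ) = (n : ℝ) - 2 * p - 1 := by push_cast; ring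
      rw [← this]
      linarith [E]
    have hKr : (K : ℝ) = (n : ℝ) + m - p - 3 := by
      have := hkK; push_cast at this; linarith
    have key : G' r = (h r) ^ (K + 1) * (ψ' r *
        (((m : ℝ) + p) * (1 - h' r ^ 2) - h r * h'' r)) := by
      simp only [hG'def, hF'def, hFdef, Eψ, hKr]
      field_simp
      ring
    rw [key]
    have h1 : 0 ≤ ψ' r := (ψpos r hrIoc).2
    have h2 := hslope r hrIcc
    have h3 := hconc r hrIcc
    have hmp : (0:ℝ) ≤ (m : ℝ) + p := by
      have : (2 : ℝ) ≤ (m : ℝ) + p := by exact_mod_cast (by omega : (2:ℤ) ≤ m + p)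
      linarith
    have h4 : 0 ≤ 1 - h' r ^ 2 := by nlinarith [h2.1, h2.2]
    have h5 : 0 ≤ ((m : ℝ) + p) * (1 - h' r ^ 2) - h r * h'' r := by
      nlinarith [mul_nonneg hmp h4, mul_nonpos_of_nonneg_of_nonpos hhr.le h3]
    exact mul_nonneg (pow_nonneg hhr.le _) (mul_nonneg h1 h5)
  -- G is monotone on Icc
  have hGc : ContinuousOn G (Set.Icc 0 R) := fun r hr => (hGder r hr).continuousWithinAt
  have hmono : MonotoneOn G (Set.Icc 0 R) := by
    apply monotoneOn_of_hasDerivWithinAt_nonneg (convex_Icc 0 R) hGc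
    · intro x hx
      rw [interior_Icc] at hx ⊢
      exact (hGder x ⟨hx.1.le, hx.2.le⟩).mono Set.Ioo_subset_Icc_self
    · intro x hx
      rw [interior_Icc] at hx
      exact hG'nonneg x hx
  have hG0 : G 0 = 0 := by simp [hGdef, hFdef, h0, ψ0]
  intro r hr
  have hrIcc : r ∈ Set.Icc (0:ℝ) R := ⟨hr.1.le, hr.2⟩
  have hGr : 0 ≤ G r := by
    rw [← hG0]
    exact hmono ⟨le_refl 0, hR.le⟩ hrIcc hr.1.le
  have hhr : 0 < h r := hpos r hr
  have hFr : 0 ≤ F r := by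
    have hpow : 0 < (h r) ^ (K + 1) := pow_pos hhr (K + 1)
    by_contra hc
    push_neg at hc
    simp only [hGdef] at hGr
    nlinarith [mul_pos (neg_pos.mpr hc) hpow]
  rw [ge_iff_le, le_div_iff₀ hhr]
  simp only [hFdef] at hFr
  nlinarith [hFr]
end

section
/- Assume moreover that 2p ≤ n−1, that h''(r) ≤ 0 and 0 < h'(r) ≤ 1 for all r ∈ [0,R], that ψ(r) > 0 and ψ'(r) ≥ 0 for all r ∈ (0,R], and that ψ'(0) = 0. Then h(r)·ψ'(r) ≥ (m+p)·h'(r)·ψ(r) for all r ∈ [0,R]. In particular ψ'(R)/ψ(R) ≥ (m+p)·h'(R)/h(R), i.e. the m-th positive Steklov eigenvalue ψ'(R)/ψ(R) on coclosed p-forms is at least (m+p)·κ, where κ = h'(R)/h(R) is the principal curvature of the boundary. -/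
open MeasureTheory Set

/-- Escobar-type lower bound: hψ' ≥ (m+p)h'ψ on [0,R], hence
ψ'(R)/ψ(R) ≥ (m+p)·h'(R)/h(R). -/
theorem stmt_6
    (n p m : ℤ) (hn : 3 ≤ n) (hp : 1 ≤ p) (hm : 1 ≤ m)
    (R : ℝ) (hR : 0 < R)
    (h h' h'' ψ ψ' ψ'' : ℝ → ℝ)
    (hder1 : ∀ r ∈ Set.Icc (0:ℝ) R, HasDerivWithinAt h (h' r) (Set.Icc 0 R) r)
    (hder2 : ∀ r ∈ Set.Icc (0:ℝ) R, HasDerivWithinAt h' (h'' r) (Set.Icc 0 R) r)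
    (hcont2 : ContinuousOn h'' (Set.Icc 0 R))
    (pder1 : ∀ r ∈ Set.Icc (0:ℝ) R, HasDerivWithinAt ψ (ψ' r) (Set.Icc 0 R) r)
    (pder2 : ∀ r ∈ Set.Icc (0:ℝ) R, HasDerivWithinAt ψ' (ψ'' r) (Set.Icc 0 R) r)
    (pcont2 : ContinuousOn ψ'' (Set.Icc 0 R))
    (h0 : h 0 = 0) (h'0 : h' 0 = 1)
    (hpos : ∀ r ∈ Set.Ioc (0:ℝ) R, 0 < h r)
    (ψ0 : ψ 0 = 0)
    (ode : ∀ r ∈ Set.Ioc (0:ℝ) R,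
      ψ'' r + ((n - 2 * p - 1 : ℤ) : ℝ) * (h' r / h r) * ψ' r
        - (((m + p) * (n + m - p - 2) : ℤ) : ℝ) * ψ r / (h r) ^ 2 = 0)
    (hp2 : 2 * p ≤ n - 1)
    (hconc : ∀ r ∈ Set.Icc (0:ℝ) R, h'' r ≤ 0)
    (hslope : ∀ r ∈ Set.Icc (0:ℝ) R, 0 < h' r ∧ h' r ≤ 1)
    (ψpos : ∀ r ∈ Set.Ioc (0:ℝ) R, 0 < ψ r ∧ 0 ≤ ψ' r)
    (ψ'0 : ψ' 0 = 0) :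
    (∀ r ∈ Set.Icc (0:ℝ) R, h r * ψ' r ≥ ((m : ℝ) + p) * h' r * ψ r) ∧
    ψ' R / ψ R ≥ ((m : ℝ) + p) * (h' R / h R) := by
  -- the exponent q = n + m - p - 2 ≥ 1
  have hqZ : (1 : ℤ) ≤ n + m - p - 2 := by omega
  set q : ℕ := (n + m - p - 2).toNat with hqdef
  have hq1 : 1 ≤ q := by omega
  have hqR : (q : ℝ) = (n : ℝ) + m - p - 2 := by
    have : ((q : ℤ) : ℝ) = ((n + m - p - 2 : ℤ) : ℝ) := by
      rw [hqdef, Int.toNat_of_nonneg (by omega)]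
    push_cast at this
    exact this
  set K : ℝ := (m : ℝ) + p with hKdef
  have hKpos : (0 : ℝ) < K := by
    have h1 : (1 : ℝ) ≤ (m : ℝ) := by exact_mod_cast hm
    have h2 : (1 : ℝ) ≤ (p : ℝ) := by exact_mod_cast hp
    rw [hKdef]; linarith
  set F : ℝ → ℝ := fun r => h r * ψ' r - K * (h' r * ψ r) with hFdef
  set G : ℝ → ℝ := fun r => h r ^ q * F r with hGdef
  -- derivative of F
  have hF : ∀ r ∈ Set.Icc (0:ℝ) R, HasDerivWithinAt F
      (h' r * ψ' r + h r * ψ'' r - K * (h'' r * ψ r + h' r * ψ' r)) (Set.Icc 0 R) r := by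
    intro r hr
    exact ((hder1 r hr).mul (pder2 r hr)).sub
      (((hder2 r hr).mul (pder1 r hr)).const_mul K)
  -- derivative of G
  have hG : ∀ r ∈ Set.Icc (0:ℝ) R, HasDerivWithinAt G
      ((q : ℝ) * h r ^ (q - 1) * h' r * F r +
        h r ^ q * (h' r * ψ' r + h r * ψ'' r - K * (h'' r * ψ r + h' r * ψ' r)))
      (Set.Icc 0 R) r := by
    intro r hr
    exact ((hder1 r hr).pow q).mul (hF r hr)
  -- positivity of the derivative of G on the interior
  have hGderiv : ∀ x ∈ Set.Ioo (0:ℝ) R, HasDerivAt G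
      ((q : ℝ) * h x ^ (q - 1) * h' x * F x +
        h x ^ q * (h' x * ψ' x + h x * ψ'' x - K * (h'' x * ψ x + h' x * ψ' x))) x := by
    intro x hx
    exact (hG x (Set.Ioo_subset_Icc_self hx)).hasDerivAt (Icc_mem_nhds hx.1 hx.2)
  have hGpos : ∀ x ∈ Set.Ioo (0:ℝ) R,
      0 ≤ (q : ℝ) * h x ^ (q - 1) * h' x * F x +
        h x ^ q * (h' x * ψ' x + h x * ψ'' x - K * (h'' x * ψ x + h' x * ψ' x)) := by
    intro x hx
    have hxIoc : x ∈ Set.Ioc (0:ℝ) R := ⟨hx.1, hx.2.le⟩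
    have hxIcc : x ∈ Set.Icc (0:ℝ) R := ⟨hx.1.le, hx.2.le⟩
    have ha : 0 < h x := hpos x hxIoc
    have hb : 0 < ψ x := (ψpos x hxIoc).1
    have hb' : 0 ≤ ψ' x := (ψpos x hxIoc).2
    have ha1 : 0 < h' x := (hslope x hxIcc).1
    have ha2 : h' x ≤ 1 := (hslope x hxIcc).2
    have ha'' : h'' x ≤ 0 := hconc x hxIcc
    have hode := ode x hxIoc
    have key : h x ^ 2 * ψ'' x =
        (((m + p) * (n + m - p - 2) : ℤ) : ℝ) * ψ x
          - ((n - 2 * p - 1 : ℤ) : ℝ) * (h x * h' x) * ψ' x := by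
      have hne : h x ≠ 0 := ne_of_gt ha
      field_simp at hode
      apply mul_left_cancel₀ hne
      push_cast at hode ⊢
      linear_combination (h x) * hode
    have hpowsplit : h x ^ q = h x ^ (q - 1) * h x := by
      rw [← pow_succ]
      congr 1
      omega
    have algid : (q : ℝ) * h' x * F x +
        h x * (h' x * ψ' x + h x * ψ'' x - K * (h'' x * ψ x + h' x * ψ' x)) =
        K * ψ x * ((q : ℝ) * (1 - h' x ^ 2) - h x * h'' x) := by
      simp only [hFdef, hKdef]
      rw [hqR]
      push_cast at key
      linear_combination key
    have hfac : 0 ≤ K * ψ x * ((q : ℝ) * (1 - h' x ^ 2) - h x * h'' x) := by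
      have t1 : 0 ≤ (q : ℝ) * (1 - h' x ^ 2) := by
        apply mul_nonneg (by positivity)
        nlinarith
      have t2 : 0 ≤ - (h x * h'' x) := by nlinarith
      have : 0 ≤ (q : ℝ) * (1 - h' x ^ 2) - h x * h'' x := by linarith
      positivity
    have grp : (q : ℝ) * h x ^ (q - 1) * h' x * F x +
        h x ^ q * (h' x * ψ' x + h x * ψ'' x - K * (h'' x * ψ x + h' x * ψ' x)) =
        h x ^ (q - 1) * ((q : ℝ) * h' x * F x +
          h x * (h' x * ψ' x + h x * ψ'' x - K * (h'' x * ψ x + h' x * ψ' x))) := by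
      rw [hpowsplit]; ring
    rw [grp, algid]
    exact mul_nonneg (pow_nonneg ha.le _) hfac
  -- G is monotone on [0,R]
  have hmono : MonotoneOn G (Set.Icc 0 R) := by
    apply monotoneOn_of_deriv_nonneg (convex_Icc 0 R)
    · intro r hr
      exact (hG r hr).continuousWithinAt
    · intro x hx
      rw [interior_Icc] at hx
      exact (hGderiv x hx).differentiableAt.differentiableWithinAt
    · intro x hx
      rw [interior_Icc] at hx
      rw [(hGderiv x hx).deriv]
      exact hGpos x hx
  have hG0 : G 0 = 0 := by
    simp only [hGdef, h0]
    rw [zero_pow (by omega : q ≠ 0)]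
    ring
  have hFnonneg : ∀ r ∈ Set.Icc (0:ℝ) R, 0 ≤ F r := by
    intro r hr
    rcases eq_or_lt_of_le hr.1 with rfl | h0r
    · simp only [hFdef, h0, ψ0, ψ'0]
      norm_num
    · have hrq : 0 < h r ^ q := pow_pos (hpos r ⟨h0r, hr.2⟩) q
      have : G 0 ≤ G r := hmono (Set.left_mem_Icc.2 hR.le) hr hr.1
      rw [hG0] at this
      have : 0 ≤ h r ^ q * F r := this
      exact nonneg_of_mul_nonneg_right this hrq
  constructor
  · intro r hr
    have hFr := hFnonneg r hr
    simp only [hFdef] at hFr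
    rw [ge_iff_le]
    have e : K * h' r * ψ r = K * (h' r * ψ r) := by ring
    rw [e]
    linarith
  · have hRIcc : R ∈ Set.Icc (0:ℝ) R := Set.right_mem_Icc.2 hR.le
    have hFR := hFnonneg R hRIcc
    have hhR : 0 < h R := hpos R ⟨hR, le_refl R⟩
    have hψR : 0 < ψ R := (ψpos R ⟨hR, le_refl R⟩).1
    rw [ge_iff_le, ← sub_nonneg]
    have expr : ψ' R / ψ R - K * (h' R / h R) =
        (h R * ψ' R - K * (h' R * ψ R)) / (h R * ψ R) := by
      field_simp
    rw [expr]
    exact div_nonneg (by rw [hFdef] at hFR; exact hFR) (by positivity)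
end

section
/- Assume moreover that ψ(r) > 0 for all r ∈ (0,R] and that h(r)·ψ'(r) = (m+p)·h'(r)·ψ(r) for all r ∈ [0,R]. Then for every r ∈ (0,R] one has (m+p)·h(r)·h''(r) + λ·(h'(r)² − 1) = 0. -/
open MeasureTheory Set

/-- In the equality case hψ' = (m+p)h'ψ, the warping function satisfies
(m+p)hh'' + λ((h')² − 1) = 0. -/
theorem stmt_7
    (n p m : ℤ) (hn : 3 ≤ n) (hp : 1 ≤ p) (hm : 1 ≤ m)
    (R : ℝ) (hR : 0 < R)
    (h h' h'' ψ ψ' ψ'' : ℝ → ℝ)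
    (hder1 : ∀ r ∈ Set.Icc (0:ℝ) R, HasDerivWithinAt h (h' r) (Set.Icc 0 R) r)
    (hder2 : ∀ r ∈ Set.Icc (0:ℝ) R, HasDerivWithinAt h' (h'' r) (Set.Icc 0 R) r)
    (hcont2 : ContinuousOn h'' (Set.Icc 0 R))
    (pder1 : ∀ r ∈ Set.Icc (0:ℝ) R, HasDerivWithinAt ψ (ψ' r) (Set.Icc 0 R) r)
    (pder2 : ∀ r ∈ Set.Icc (0:ℝ) R, HasDerivWithinAt ψ' (ψ'' r) (Set.Icc 0 R) r)
    (pcont2 : ContinuousOn ψ'' (Set.Icc 0 R))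
    (h0 : h 0 = 0) (h'0 : h' 0 = 1)
    (hpos : ∀ r ∈ Set.Ioc (0:ℝ) R, 0 < h r)
    (ψ0 : ψ 0 = 0)
    (ode : ∀ r ∈ Set.Ioc (0:ℝ) R,
      ψ'' r + ((n - 2 * p - 1 : ℤ) : ℝ) * (h' r / h r) * ψ' r
        - (((m + p) * (n + m - p - 2) : ℤ) : ℝ) * ψ r / (h r) ^ 2 = 0)
    (ψpos : ∀ r ∈ Set.Ioc (0:ℝ) R, 0 < ψ r)
    (heq : ∀ r ∈ Set.Icc (0:ℝ) R, h r * ψ' r = ((m : ℝ) + p) * h' r * ψ r) :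
    ∀ r ∈ Set.Ioc (0:ℝ) R,
      ((m : ℝ) + p) * h r * h'' r
        + (((m + p) * (n + m - p - 2) : ℤ) : ℝ) * ((h' r) ^ 2 - 1) = 0 := by
  intro r hr
  have hrI : r ∈ Set.Icc (0:ℝ) R := ⟨le_of_lt hr.1, hr.2⟩
  have hH : 0 < h r := hpos r hr
  have hΨ : 0 < ψ r := ψpos r hr
  have hhne : h r ≠ 0 := ne_of_gt hH
  have hψne : ψ r ≠ 0 := ne_of_gt hΨ
  have hf : HasDerivWithinAt (fun x => h x * ψ' x)
      (h' r * ψ' r + h r * ψ'' r) (Set.Icc 0 R) r :=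
    (hder1 r hrI).mul (pder2 r hrI)
  have hg : HasDerivWithinAt (fun x => ((m : ℝ) + p) * (h' x * ψ x))
      (((m : ℝ) + p) * (h'' r * ψ r + h' r * ψ' r)) (Set.Icc 0 R) r :=
    ((hder2 r hrI).mul (pder1 r hrI)).const_mul _
  have hf' : HasDerivWithinAt (fun x => ((m : ℝ) + p) * (h' x * ψ x))
      (h' r * ψ' r + h r * ψ'' r) (Set.Icc 0 R) r := by
    refine hf.congr (fun x hx => ?_) ?_
    · rw [heq x hx]; ring
    · rw [heq r hrI]; ring
  have hud : UniqueDiffWithinAt ℝ (Set.Icc (0:ℝ) R) r :=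
    (uniqueDiffOn_Icc hR) r hrI
  have key : h' r * ψ' r + h r * ψ'' r
      = ((m : ℝ) + p) * (h'' r * ψ r + h' r * ψ' r) :=
    (hf'.derivWithin hud).symm.trans (hg.derivWithin hud)
  have heqr := heq r hrI
  have hL : (ψ'' r * h r + ((n : ℝ) - 2 * p - 1) * h' r * ψ' r) * h r ^ 2
      - h r * (((m : ℝ) + p) * ((n : ℝ) + m - p - 2) * ψ r) = 0 := by
    have hode := ode r hr
    push_cast at hode
    field_simp at hode
    linear_combination (h r) * hode
  have main : (((m : ℝ) + p) * h r * h'' r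
      + (((m + p) * (n + m - p - 2) : ℤ) : ℝ) * ((h' r) ^ 2 - 1)) * ψ r * h r = 0 := by
    push_cast
    linear_combination (-(h r) ^ 2) * key + hL
      - ((((m : ℝ) + p) + ((n : ℝ) - 2 * p - 1) - 1) * h r * h' r) * heqr
  rcases mul_eq_zero.1 main with hmain | hmain
  · rcases mul_eq_zero.1 hmain with h2 | h2
    · exact h2
    · exact absurd h2 hψne
  · exact absurd hmain hhne
end

section
/- Assume moreover that 2p ≤ n−1, that h''(r) ≤ 0 and 0 < h'(r) ≤ 1 for all r ∈ [0,R], that ψ(r) > 0 and ψ'(r) ≥ 0 for all r ∈ (0,R], that ψ'(0) = 0, and that equality holds at the endpoint: h(R)·ψ'(R) = (m+p)·h'(R)·ψ(R). Then h(r) = r for all r ∈ [0,R]. -/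
open MeasureTheory Set

/-- Rigidity: equality at the endpoint forces h(r) = r, i.e. M is the Euclidean ball. -/
theorem stmt_8
    (n p m : ℤ) (hn : 3 ≤ n) (hp : 1 ≤ p) (hm : 1 ≤ m)
    (R : ℝ) (hR : 0 < R)
    (h h' h'' ψ ψ' ψ'' : ℝ → ℝ)
    (hder1 : ∀ r ∈ Set.Icc (0:ℝ) R, HasDerivWithinAt h (h' r) (Set.Icc 0 R) r)
    (hder2 : ∀ r ∈ Set.Icc (0:ℝ) R, HasDerivWithinAt h' (h'' r) (Set.Icc 0 R) r)
    (hcont2 : ContinuousOn h'' (Set.Icc 0 R))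
    (pder1 : ∀ r ∈ Set.Icc (0:ℝ) R, HasDerivWithinAt ψ (ψ' r) (Set.Icc 0 R) r)
    (pder2 : ∀ r ∈ Set.Icc (0:ℝ) R, HasDerivWithinAt ψ' (ψ'' r) (Set.Icc 0 R) r)
    (pcont2 : ContinuousOn ψ'' (Set.Icc 0 R))
    (h0 : h 0 = 0) (h'0 : h' 0 = 1)
    (hpos : ∀ r ∈ Set.Ioc (0:ℝ) R, 0 < h r)
    (ψ0 : ψ 0 = 0)
    (ode : ∀ r ∈ Set.Ioc (0:ℝ) R,
      ψ'' r + ((n - 2 * p - 1 : ℤ) : ℝ) * (h' r / h r) * ψ' r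
        - (((m + p) * (n + m - p - 2) : ℤ) : ℝ) * ψ r / (h r) ^ 2 = 0)
    (hp2 : 2 * p ≤ n - 1)
    (hconc : ∀ r ∈ Set.Icc (0:ℝ) R, h'' r ≤ 0)
    (hslope : ∀ r ∈ Set.Icc (0:ℝ) R, 0 < h' r ∧ h' r ≤ 1)
    (ψpos : ∀ r ∈ Set.Ioc (0:ℝ) R, 0 < ψ r ∧ 0 ≤ ψ' r)
    (ψ'0 : ψ' 0 = 0)
    (heqR : h R * ψ' R = ((m : ℝ) + p) * h' R * ψ R) :
    ∀ r ∈ Set.Icc (0:ℝ) R, h r = r := by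
  -- Constants
  set K : ℝ := (m : ℝ) + (p : ℝ) with hKdef
  set Q : ℝ := (n : ℝ) + (m : ℝ) - (p : ℝ) - 2 with hQdef
  have hm1 : (1:ℝ) ≤ (m:ℝ) := by exact_mod_cast hm
  have hp1 : (1:ℝ) ≤ (p:ℝ) := by exact_mod_cast hp
  have hKpos : 0 < K := by rw [hKdef]; linarith
  have hqZ : (1:ℤ) ≤ n + m - p - 2 := by omega
  have hQ1 : (1:ℝ) ≤ Q := by
    have h1 : ((1:ℤ):ℝ) ≤ ((n + m - p - 2 : ℤ):ℝ) := by exact_mod_cast hqZ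
    push_cast at h1; rw [hQdef]; linarith
  obtain ⟨j, hj⟩ : ∃ j : ℕ, ((j:ℤ) + 1 = n + m - p - 2) :=
    ⟨(n + m - p - 3).toNat, by omega⟩
  have hjQ : ((j:ℝ) + 1) = Q := by
    have h1 : (((j:ℤ) + 1 : ℤ) : ℝ) = ((n + m - p - 2 : ℤ) : ℝ) := by exact_mod_cast hj
    push_cast at h1; rw [hQdef]; linarith
  -- F and its derivative
  set F : ℝ → ℝ := fun r => h r * ψ' r - K * (h' r * ψ r) with hFdef
  set F' : ℝ → ℝ := fun r =>
    h' r * ψ' r + h r * ψ'' r - K * (h'' r * ψ r + h' r * ψ' r) with hF'def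
  have hF : ∀ r ∈ Set.Icc (0:ℝ) R, HasDerivWithinAt F (F' r) (Set.Icc 0 R) r := by
    intro r hr
    exact ((hder1 r hr).mul (pder2 r hr)).sub
      (((hder2 r hr).mul (pder1 r hr)).const_mul K)
  -- G = h^(j+1) * F and its derivative D
  set G : ℝ → ℝ := fun r => h r ^ (j+1) * F r with hGdef
  set D : ℝ → ℝ := fun r =>
    ((j:ℝ) + 1) * h r ^ j * h' r * F r + h r ^ (j+1) * F' r with hDdef
  have hG : ∀ r ∈ Set.Icc (0:ℝ) R, HasDerivWithinAt G (D r) (Set.Icc 0 R) r := by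
    intro r hr
    have h1 := ((hder1 r hr).pow (j+1)).mul (hF r hr)
    have h2 : (((j+1 : ℕ)):ℝ) * h r ^ (j + 1 - 1) * h' r * F r + h r ^ (j+1) * F' r
        = D r := by
      rw [hDdef]; simp only [Nat.add_sub_cancel]; push_cast; ring
    simp only [Pi.pow_apply] at h1
    rw [h2] at h1
    rw [hGdef]
    exact h1
  -- Key algebraic identity on (0, R]
  have key : ∀ r ∈ Set.Ioc (0:ℝ) R,
      D r = h r ^ j * (K * ψ r * (Q * (1 - h' r ^ 2) - h r * h'' r)) := by
    intro r hr
    have hne : h r ≠ 0 := (hpos r hr).ne'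
    have e := ode r hr
    push_cast at e
    field_simp at e
    have e' : h r * ((ψ'' r * h r + ((n:ℝ) - 2*(p:ℝ) - 1) * h' r * ψ' r) * h r
        - ((m:ℝ) + (p:ℝ)) * (((n:ℝ) + (m:ℝ) - (p:ℝ) - 2) * ψ r)) = 0 := by
      linear_combination (h r) * e
    have e3 := (mul_eq_zero.1 e').resolve_left hne
    have hjr : (j:ℝ) = (n:ℝ) + (m:ℝ) - (p:ℝ) - 3 := by
      have h4 := hjQ; rw [hQdef] at h4; linarith
    rw [hDdef, hFdef, hF'def, hKdef, hQdef]
    simp only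
    rw [pow_succ, hjr]
    linear_combination (h r ^ j) * e3
  -- D ≥ 0 on (0, R]
  have hDnn : ∀ r ∈ Set.Ioc (0:ℝ) R, 0 ≤ D r := by
    intro r hr
    rw [key r hr]
    have h1 : 0 < h r := hpos r hr
    have h2 : 0 < ψ r := (ψpos r hr).1
    have hs := hslope r ⟨le_of_lt hr.1, hr.2⟩
    have hc := hconc r ⟨le_of_lt hr.1, hr.2⟩
    have u1 : (0:ℝ) ≤ 1 - h' r ^ 2 := by
      nlinarith [mul_nonneg (sub_nonneg.2 hs.2) hs.1.le]
    have t1 : 0 ≤ Q * (1 - h' r ^ 2) := mul_nonneg (by linarith) u1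
    have t2 : h r * h'' r ≤ 0 := mul_nonpos_of_nonneg_of_nonpos h1.le hc
    have t3 : 0 ≤ Q * (1 - h' r ^ 2) - h r * h'' r := by linarith
    exact mul_nonneg (pow_nonneg h1.le j)
      (mul_nonneg (mul_nonneg hKpos.le h2.le) t3)
  -- G is monotone on [0, R]
  have hGcont : ContinuousOn G (Set.Icc 0 R) := fun r hr => (hG r hr).continuousWithinAt
  have hGDA : ∀ r ∈ Set.Ioo (0:ℝ) R, HasDerivAt G (D r) r := by
    intro r hr
    exact (hG r (Ioo_subset_Icc_self hr)).hasDerivAt (Icc_mem_nhds hr.1 hr.2)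
  have hmono : MonotoneOn G (Set.Icc 0 R) := by
    apply monotoneOn_of_deriv_nonneg (convex_Icc 0 R) hGcont
    · rw [interior_Icc]
      intro x hx
      exact (hGDA x hx).differentiableAt.differentiableWithinAt
    · rw [interior_Icc]
      intro x hx
      rw [(hGDA x hx).deriv]
      exact hDnn x ⟨hx.1, hx.2.le⟩
  -- boundary values
  have hG0 : G 0 = 0 := by rw [hGdef]; simp [hFdef, h0]
  have hGR : G R = 0 := by
    have hFR : F R = 0 := by rw [hFdef]; simp only; linear_combination heqR
    rw [hGdef]
    show h R ^ (j+1) * F R = 0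
    rw [hFR, mul_zero]
  have hGzero : ∀ r ∈ Set.Icc (0:ℝ) R, G r = 0 := by
    intro r hr
    have l1 : G 0 ≤ G r := hmono (Set.left_mem_Icc.2 hR.le) hr hr.1
    have l2 : G r ≤ G R := hmono hr (Set.right_mem_Icc.2 hR.le) hr.2
    rw [hG0] at l1; rw [hGR] at l2; linarith
  -- hence D = 0 on the interior
  have hD0 : ∀ r ∈ Set.Ioo (0:ℝ) R, D r = 0 := by
    intro r hr
    have h1 : HasDerivAt G (D r) r := hGDA r hr
    have h2 : HasDerivAt G 0 r := by
      have hmem : Set.Icc (0:ℝ) R ∈ nhds r := Icc_mem_nhds hr.1 hr.2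
      have hev : G =ᶠ[nhds r] (fun _ => (0:ℝ)) :=
        Filter.eventuallyEq_of_mem hmem (fun x hx => hGzero x hx)
      exact (hasDerivAt_const r (0:ℝ)).congr_of_eventuallyEq hev
    exact h1.unique h2
  -- h' = 1 on the interior
  have hslope1 : ∀ r ∈ Set.Ioo (0:ℝ) R, h' r = 1 := by
    intro r hr
    have hD := hD0 r hr
    rw [key r ⟨hr.1, hr.2.le⟩] at hD
    have h1 : 0 < h r := hpos r ⟨hr.1, hr.2.le⟩
    have h2 : 0 < ψ r := (ψpos r ⟨hr.1, hr.2.le⟩).1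
    have hs := hslope r ⟨hr.1.le, hr.2.le⟩
    have hc := hconc r ⟨hr.1.le, hr.2.le⟩
    have hpj : 0 < h r ^ j := pow_pos h1 j
    have t2 : h r * h'' r ≤ 0 := mul_nonpos_of_nonneg_of_nonpos h1.le hc
    have t1 : (0:ℝ) ≤ 1 - h' r ^ 2 := by
      nlinarith [mul_nonneg (sub_nonneg.2 hs.2) hs.1.le]
    have hz : Q * (1 - h' r ^ 2) - h r * h'' r = 0 := by
      rcases mul_eq_zero.1 hD with h3 | h3
      · exact absurd h3 (ne_of_gt hpj)
      · rcases mul_eq_zero.1 h3 with h4 | h4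
        · exact absurd h4 (ne_of_gt (mul_pos hKpos h2))
        · exact h4
    have hQ0 : (0:ℝ) ≤ Q - 1 := by linarith
    have t4 := mul_nonneg hQ0 t1
    have hsq : h' r ^ 2 = 1 := by linarith [hz, t2, t4, t1]
    have t5 : 0 ≤ h' r * (1 - h' r) := mul_nonneg hs.1.le (by linarith [hs.2])
    linarith [t5, hsq, hs.2]
  -- conclude h r = r
  intro r hr
  set φ : ℝ → ℝ := fun r => h r - r with hφdef
  have hφd : ∀ x ∈ Set.Ioo (0:ℝ) R, HasDerivAt φ 0 x := by
    intro x hx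
    rw [hφdef]
    have h1 := ((hder1 x (Ioo_subset_Icc_self hx)).hasDerivAt
      (Icc_mem_nhds hx.1 hx.2)).sub (hasDerivAt_id' x)
    rw [hslope1 x hx, sub_self] at h1
    exact h1
  have hφcont : ContinuousOn φ (Set.Icc 0 R) := by
    rw [hφdef]
    exact fun x hx => ((hder1 x hx).continuousWithinAt).sub continuousWithinAt_id
  have hφdiff : DifferentiableOn ℝ φ (interior (Set.Icc (0:ℝ) R)) := by
    rw [interior_Icc]
    exact fun x hx => (hφd x hx).differentiableAt.differentiableWithinAt
  have hmonoφ : MonotoneOn φ (Set.Icc 0 R) := by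
    apply monotoneOn_of_deriv_nonneg (convex_Icc 0 R) hφcont hφdiff
    rw [interior_Icc]
    intro x hx
    rw [(hφd x hx).deriv]
  have hantiφ : AntitoneOn φ (Set.Icc 0 R) := by
    apply antitoneOn_of_deriv_nonpos (convex_Icc 0 R) hφcont hφdiff
    rw [interior_Icc]
    intro x hx
    rw [(hφd x hx).deriv]
  have l1 : φ 0 ≤ φ r := hmonoφ (Set.left_mem_Icc.2 hR.le) hr hr.1
  have l2 : φ r ≤ φ 0 := hantiφ (Set.left_mem_Icc.2 hR.le) hr hr.1
  have hc : φ r = φ 0 := le_antisymm l2 l1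
  rw [hφdef] at hc
  simp only [h0] at hc
  linarith
end

section
/- Let R > 0, λ > 0, K ≥ 0, and let h : [0,R] → ℝ be continuous with 0 ≤ h(r) ≤ K·(R−r) for all r ∈ [0,R]. Then for every δ > 0 there exists a continuously differentiable ψ : [0,R] → ℝ with ψ(0) = 1, ψ(R) = 0, and ∫₀^R ψ'(r)²·h(r)² dr + λ·∫₀^R ψ(r)² dr < R·λ + δ. -/
open MeasureTheory Set intervalIntegral

/-- Test-function estimate behind Theorem 1.5(ii): the reduced Rayleigh energy can be
made smaller than R·λ + δ. -/
theorem stmt_12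
    (R lam K : ℝ) (hR : 0 < R) (hlam : 0 < lam) (hK : 0 ≤ K)
    (h : ℝ → ℝ) (hc : ContinuousOn h (Set.Icc 0 R))
    (hbd : ∀ r ∈ Set.Icc (0:ℝ) R, 0 ≤ h r ∧ h r ≤ K * (R - r)) :
    ∀ δ > (0:ℝ), ∃ ψ ψ' : ℝ → ℝ,
      (∀ r ∈ Set.Icc (0:ℝ) R, HasDerivWithinAt ψ (ψ' r) (Set.Icc 0 R) r) ∧
      ContinuousOn ψ' (Set.Icc 0 R) ∧ ψ 0 = 1 ∧ ψ R = 0 ∧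
      (∫ r in (0:ℝ)..R, (ψ' r) ^ 2 * (h r) ^ 2)
        + lam * (∫ r in (0:ℝ)..R, (ψ r) ^ 2) < R * lam + δ := by
  intro δ hδ
  obtain ⟨M, hM⟩ := exists_nat_gt (K ^ 2 * R / (3 * δ))
  have hM0 : (0:ℝ) ≤ M := Nat.cast_nonneg M
  have hRne : R ≠ 0 := hR.ne'
  have hRpow : (0:ℝ) < R ^ (M + 1) := pow_pos hR _
  set ψ : ℝ → ℝ := fun r => 1 - r ^ (M + 1) / R ^ (M + 1) with hψdef
  set ψ' : ℝ → ℝ := fun r => -((M + 1) * r ^ M / R ^ (M + 1)) with hψ'def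
  refine ⟨ψ, ψ', ?_, ?_, ?_, ?_, ?_⟩
  · intro r _
    have : HasDerivAt ψ (ψ' r) r := by
      have h1 : HasDerivAt (fun r : ℝ => r ^ (M + 1)) ((M + 1) * r ^ M) r := by
        simpa using hasDerivAt_pow (M + 1) r
      have h2 := (h1.div_const (R ^ (M + 1))).const_sub 1
      simpa [hψdef, hψ'def, neg_div] using h2
    exact this.hasDerivWithinAt
  · fun_prop
  · simp [hψdef]
  · simp [hψdef, hRpow.ne']
  · -- main estimate
    set g : ℝ → ℝ := fun r => ((M + 1) * r ^ M / R ^ (M + 1)) ^ 2 * (K * (R - r)) ^ 2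
      with hgdef
    have huIcc : Set.uIcc (0:ℝ) R = Set.Icc 0 R := Set.uIcc_of_le hR.le
    -- integrabilities
    have hcψ' : ContinuousOn (fun r => (ψ' r) ^ 2 * (h r) ^ 2) (Set.Icc 0 R) := by
      apply ContinuousOn.mul _ (hc.pow 2)
      fun_prop
    have hintA : IntervalIntegrable (fun r => (ψ' r) ^ 2 * (h r) ^ 2) volume 0 R := by
      apply ContinuousOn.intervalIntegrable; rwa [huIcc]
    have hintg : IntervalIntegrable g volume 0 R := by
      apply Continuous.intervalIntegrable; fun_prop
    have hintψ : IntervalIntegrable (fun r => (ψ r) ^ 2) volume 0 R := by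
      apply Continuous.intervalIntegrable; fun_prop
    -- pointwise bound for the energy term
    have hA : (∫ r in (0:ℝ)..R, (ψ' r) ^ 2 * (h r) ^ 2) ≤ ∫ r in (0:ℝ)..R, g r := by
      apply integral_mono_on hR.le hintA hintg
      intro r hr
      obtain ⟨hh0, hhK⟩ := hbd r hr
      have h1 : (h r) ^ 2 ≤ (K * (R - r)) ^ 2 := pow_le_pow_left₀ hh0 hhK 2
      have h2 : (ψ' r) ^ 2 = ((M + 1) * r ^ M / R ^ (M + 1)) ^ 2 := by
        simp [hψ'def]
      rw [h2]
      exact mul_le_mul_of_nonneg_left h1 (sq_nonneg _)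
    -- exact value of ∫ g
    have hgval : (∫ r in (0:ℝ)..R, g r)
        = K ^ 2 * R * (M + 1) / ((2 * M + 1) * (2 * M + 3)) := by
      have hexp : ∀ r : ℝ, g r = ((M + 1 : ℝ) ^ 2 * K ^ 2 / R ^ (2 * M + 2)) *
          (R ^ 2 * r ^ (2 * M) - 2 * R * r ^ (2 * M + 1) + r ^ (2 * M + 2)) := by
        intro r
        have hRq : (R ^ (M + 1)) ^ 2 = R ^ (2 * M + 2) := by ring
        simp only [hgdef]
        field_simp
        ring
      rw [intervalIntegral.integral_congr (fun r _ => hexp r),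
        intervalIntegral.integral_const_mul]
      have i1 : IntervalIntegrable (fun r : ℝ => R ^ 2 * r ^ (2 * M)) volume 0 R := by
        apply Continuous.intervalIntegrable; fun_prop
      have i2 : IntervalIntegrable (fun r : ℝ => 2 * R * r ^ (2 * M + 1)) volume 0 R := by
        apply Continuous.intervalIntegrable; fun_prop
      have i3 : IntervalIntegrable (fun r : ℝ => r ^ (2 * M + 2)) volume 0 R := by
        apply Continuous.intervalIntegrable; fun_prop
      rw [intervalIntegral.integral_add (i1.sub i2) i3, intervalIntegral.integral_sub i1 i2,
        intervalIntegral.integral_const_mul, intervalIntegral.integral_const_mul,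
        integral_pow, integral_pow, integral_pow]
      have e1 : (0:ℝ) ^ (2 * M + 1) = 0 := zero_pow (by omega)
      have e2 : (0:ℝ) ^ (2 * M + 1 + 1) = 0 := zero_pow (by omega)
      have e3 : (0:ℝ) ^ (2 * M + 2 + 1) = 0 := zero_pow (by omega)
      rw [e1, e2, e3]
      have hp1 : R ^ (2 * M + 1 + 1) = R ^ (2 * M + 1) * R := by ring
      have hp2 : R ^ (2 * M + 2 + 1) = R ^ (2 * M + 1) * R * R := by ring
      have hp0 : R ^ (2 * M + 2) = R ^ (2 * M + 1) * R := by ring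
      rw [hp1, hp2]
      have hSne : R ^ (2 * M + 1) ≠ 0 := pow_ne_zero _ hRne
      have d1 : (0:ℝ) < 2 * M + 1 := by positivity
      have d2 : (0:ℝ) < 2 * M + 3 := by positivity
      push_cast
      field_simp
      ring
    -- bound for the potential term
    have hB : (∫ r in (0:ℝ)..R, (ψ r) ^ 2) ≤ R := by
      have h1R : (∫ r in (0:ℝ)..R, (1:ℝ)) = R := by simp
      refine le_trans ?_ h1R.le
      apply integral_mono_on hR.le hintψ (by apply Continuous.intervalIntegrable; fun_prop)
      intro r hr
      have h1 : 0 ≤ r ^ (M + 1) := pow_nonneg hr.1 _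
      have h2 : r ^ (M + 1) ≤ R ^ (M + 1) := pow_le_pow_left₀ hr.1 hr.2 _
      have hψ0 : 0 ≤ ψ r := by
        simp only [hψdef, sub_nonneg]
        rw [div_le_one hRpow]; exact h2
      have hψ1 : ψ r ≤ 1 := by
        simp only [hψdef]
        have : 0 ≤ r ^ (M + 1) / R ^ (M + 1) := div_nonneg h1 hRpow.le
        linarith
      nlinarith
    -- final arithmetic
    have hgsmall : K ^ 2 * R * (M + 1) / ((2 * M + 1) * (2 * M + 3)) < δ := by
      rw [div_lt_iff₀ (by positivity)]
      have h1 : K ^ 2 * R < 3 * δ * M + 3 * δ := by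
        rcases lt_or_ge (K ^ 2 * R / (3 * δ)) 0 with hneg | hpos
        · have : K ^ 2 * R < 0 := by
            by_contra hcon
            push_neg at hcon
            exact absurd (div_nonneg hcon (by positivity)) (not_le.mpr hneg)
          nlinarith
        · have := (div_lt_iff₀ (by positivity : (0:ℝ) < 3 * δ)).mp hM
          nlinarith
      nlinarith [sq_nonneg ((M:ℝ)), mul_nonneg (mul_nonneg (sq_nonneg K) hR.le) hM0,
        mul_nonneg hδ.le hM0, mul_nonneg (mul_nonneg hδ.le hM0) hM0]
    calc (∫ r in (0:ℝ)..R, (ψ' r) ^ 2 * (h r) ^ 2) + lam * (∫ r in (0:ℝ)..R, (ψ r) ^ 2)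
        ≤ K ^ 2 * R * (M + 1) / ((2 * M + 1) * (2 * M + 3)) + lam * R := by
          rw [← hgval]
          exact add_le_add hA (mul_le_mul_of_nonneg_left hB hlam.le)
      _ < δ + lam * R := by linarith
      _ = R * lam + δ := by ring
end

section
/- Let n ≥ 4 and p ≥ 0 be integers with 2p ≤ n−4, let R > 0, λ > 0, C > 0, K ≥ 0, and let h : [0,R] → ℝ be continuous with 0 ≤ h(r) ≤ C and h(r) ≤ K·(R−r) for all r ∈ [0,R]. Then for every δ > 0 there exists a continuously differentiable ψ : [0,R] → ℝ with ψ(0) = 1, ψ(R) = 0, and ∫₀^R ( ψ'(r)²·h(r)^{n−2p−1} + λ·ψ(r)²·h(r)^{n−2p−3} ) dr < C^{n−2p−3}·R·λ + δ. -/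
open MeasureTheory Set

private lemma aux_frac (s : ℝ) (hs : 1 ≤ s) :
    s ^ 2 * (1 / (2 * s - 1) - 2 / (2 * s) + 1 / (2 * s + 1)) ≤ 1 / (3 * s) := by
  have h1 : (0:ℝ) < 2 * s - 1 := by linarith
  have h2 : (0:ℝ) < 2 * s := by linarith
  have h3 : (0:ℝ) < 2 * s + 1 := by linarith
  have h4 : (0:ℝ) < 4 * s ^ 2 - 1 := by nlinarith
  have h5 : (0:ℝ) < 3 * s := by linarith
  have key : s ^ 2 * (1 / (2 * s - 1) - 2 / (2 * s) + 1 / (2 * s + 1))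
      = s / (4 * s ^ 2 - 1) := by
    rw [div_sub_div _ _ (by positivity) (by positivity), div_add_div _ _ (by positivity) (by positivity), mul_div_assoc', div_eq_div_iff (by positivity) (by positivity)]
    ring
  rw [key, div_le_div_iff₀ h4 h5]
  nlinarith

private lemma aux_val (R C K : ℝ) (k e : ℕ) (hR : 0 < R) (s : ℝ)
    (hs_def : s = (k:ℝ) + 1) (hs1 : 1 ≤ s) :
    C ^ e * K ^ 2 * (s ^ 2 / R ^ (2 * k + 2)) * (R ^ 2 * (R ^ (2 * k + 1) / (2 * k + 1))
        - 2 * R * (R ^ (2 * k + 2) / (2 * k + 2)) + R ^ (2 * k + 3) / (2 * k + 3))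
        = (C ^ e * K ^ 2 * R) * (s ^ 2 * (1 / (2 * s - 1) - 2 / (2 * s) + 1 / (2 * s + 1))) := by
  have e1 : (2 * (k:ℝ) + 1) = 2 * s - 1 := by rw [hs_def]; ring
  have e2 : (2 * (k:ℝ) + 2) = 2 * s := by rw [hs_def]; ring
  have e3 : (2 * (k:ℝ) + 3) = 2 * s + 1 := by rw [hs_def]; ring
  have hp1 : R ^ (2 * k + 1) = R ^ (2 * k) * R := by ring
  have hp2 : R ^ (2 * k + 2) = R ^ (2 * k) * R ^ 2 := by ring
  have hp3 : R ^ (2 * k + 3) = R ^ (2 * k) * R ^ 3 := by ring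
  have h1 : (0:ℝ) < 2 * s - 1 := by linarith
  have h2 : (0:ℝ) < 2 * s := by linarith
  have h3 : (0:ℝ) < 2 * s + 1 := by linarith
  have hQ : (0:ℝ) < R ^ (2 * k) := by positivity
  rw [hp1, hp2, hp3, e1, e2, e3]
  field_simp

/-- Test-function estimate behind Theorem 1.5(i): the reduced Rayleigh energy can be
made smaller than C^{n-2p-3}·R·λ + δ. -/
theorem stmt_13
    (n p : ℤ) (hn : 4 ≤ n) (hp : 0 ≤ p) (hpn : 2 * p ≤ n - 4)
    (R lam C K : ℝ) (hR : 0 < R) (hlam : 0 < lam) (hC : 0 < C) (hK : 0 ≤ K)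
    (h : ℝ → ℝ) (hc : ContinuousOn h (Set.Icc 0 R))
    (hbd : ∀ r ∈ Set.Icc (0:ℝ) R, 0 ≤ h r ∧ h r ≤ C ∧ h r ≤ K * (R - r)) :
    ∀ δ > (0:ℝ), ∃ ψ ψ' : ℝ → ℝ,
      (∀ r ∈ Set.Icc (0:ℝ) R, HasDerivWithinAt ψ (ψ' r) (Set.Icc 0 R) r) ∧
      ContinuousOn ψ' (Set.Icc 0 R) ∧ ψ 0 = 1 ∧ ψ R = 0 ∧
      (∫ r in (0:ℝ)..R,
          (ψ' r) ^ 2 * h r ^ (n - 2 * p - 1) + lam * (ψ r) ^ 2 * h r ^ (n - 2 * p - 3))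
        < C ^ (n - 2 * p - 3) * R * lam + δ := by
  intro δ hδ
  -- natural-number exponents
  set e : ℕ := (n - 2 * p - 3).toNat with he_def
  have hee : ((e : ℤ)) = n - 2 * p - 3 := by
    rw [he_def, Int.toNat_of_nonneg (by linarith)]
  have hee2 : n - 2 * p - 1 = ((e + 2 : ℕ) : ℤ) := by push_cast; omega
  have hee3 : n - 2 * p - 3 = ((e : ℕ) : ℤ) := hee.symm
  -- choose a large k
  obtain ⟨k, hk⟩ := exists_nat_gt (C ^ e * K ^ 2 * R / (3 * δ))
  set s : ℝ := (k : ℝ) + 1 with hs_def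
  have hs1 : (1:ℝ) ≤ s := by
    rw [hs_def]
    have := Nat.cast_nonneg (α := ℝ) k
    linarith
  have hs0 : (0:ℝ) < s := by linarith
  have hkey : C ^ e * K ^ 2 * R < 3 * s * δ := by
    have h1 : C ^ e * K ^ 2 * R / (3 * δ) < s := by
      have : (k:ℝ) ≤ s := by simp [hs_def]
      linarith
    calc C ^ e * K ^ 2 * R = C ^ e * K ^ 2 * R / (3 * δ) * (3 * δ) := by
          field_simp
      _ < s * (3 * δ) := by
          apply mul_lt_mul_of_pos_right h1 (by positivity)
      _ = 3 * s * δ := by ring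
  -- the test function
  set ψ : ℝ → ℝ := fun r => 1 - (r / R) ^ (k + 1) with hψ_def
  set ψ' : ℝ → ℝ := fun r => -(s * (r / R) ^ k * (1 / R)) with hψ'_def
  have hderiv : ∀ r : ℝ, HasDerivAt ψ (ψ' r) r := by
    intro r
    have h1 : HasDerivAt (fun r : ℝ => r / R) (1 / R) r := by
      simpa using (hasDerivAt_id r).div_const R
    have h2 : HasDerivAt (fun r : ℝ => (r / R) ^ (k + 1))
        ((k + 1 : ℕ) * (r / R) ^ (k + 1 - 1) * (1 / R)) r := h1.pow (k + 1)
    have h3 : ((k + 1 : ℕ) : ℝ) * (r / R) ^ (k + 1 - 1) * (1 / R)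
        = s * (r / R) ^ k * (1 / R) := by
      push_cast [hs_def]; ring_nf
    rw [h3] at h2
    simpa [hψ_def, hψ'_def] using h2.const_sub 1
  have hdivc : Continuous fun r : ℝ => r / R := continuous_id.div_const R
  have hψ'cont : Continuous ψ' := by
    rw [hψ'_def]
    exact ((continuous_const.mul (hdivc.pow k)).mul continuous_const).neg
  have hψcont : Continuous ψ := by
    rw [hψ_def]
    exact continuous_const.sub (hdivc.pow (k + 1))
  refine ⟨ψ, ψ', fun r _ => (hderiv r).hasDerivWithinAt, hψ'cont.continuousOn, ?_, ?_, ?_⟩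
  · simp [hψ_def, zero_div]
  · simp [hψ_def, div_self hR.ne']
  -- the integral estimate
  rw [hee2, hee3]
  simp only [zpow_natCast]
  set F : ℝ → ℝ := fun r => (ψ' r) ^ 2 * h r ^ (e + 2) + lam * (ψ r) ^ 2 * h r ^ e
    with hF_def
  set B : ℝ := C ^ e * K ^ 2 * (s ^ 2 / R ^ (2 * k + 2)) with hB_def
  set G : ℝ → ℝ := fun r => B * (r ^ (2 * k) * (R - r) ^ 2) + lam * C ^ e with hG_def
  have hB0 : 0 ≤ B := by positivity
  -- pointwise bound
  have hFG : ∀ r ∈ Icc (0:ℝ) R, F r ≤ G r := by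
    intro r hr
    obtain ⟨hr0, hrR⟩ := hr
    obtain ⟨hh0, hhC, hhK⟩ := hbd r ⟨hr0, hrR⟩
    have hhe : h r ^ e ≤ C ^ e := pow_le_pow_left₀ hh0 hhC e
    have hhe0 : 0 ≤ h r ^ e := pow_nonneg hh0 e
    have hh2 : h r ^ 2 ≤ (K * (R - r)) ^ 2 := pow_le_pow_left₀ hh0 hhK 2
    -- first summand
    have hψ'sq : (ψ' r) ^ 2 = s ^ 2 * (r ^ (2 * k) / R ^ (2 * k + 2)) := by
      rw [hψ'_def]
      field_simp
      rw [div_pow, div_pow, ← pow_mul, ← pow_mul, pow_add, mul_comm k 2]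
      field_simp
    have hfirst : (ψ' r) ^ 2 * h r ^ (e + 2) ≤ B * (r ^ (2 * k) * (R - r) ^ 2) := by
      have hsplit : h r ^ (e + 2) = h r ^ e * h r ^ 2 := by rw [pow_add]
      rw [hsplit, hψ'sq]
      have h1 : h r ^ e * h r ^ 2 ≤ C ^ e * (K * (R - r)) ^ 2 := by
        apply mul_le_mul hhe hh2 (pow_nonneg hh0 2) (by positivity)
      calc s ^ 2 * (r ^ (2 * k) / R ^ (2 * k + 2)) * (h r ^ e * h r ^ 2)
          ≤ s ^ 2 * (r ^ (2 * k) / R ^ (2 * k + 2)) * (C ^ e * (K * (R - r)) ^ 2) := by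
            apply mul_le_mul_of_nonneg_left h1 (by positivity)
        _ = B * (r ^ (2 * k) * (R - r) ^ 2) := by
            rw [hB_def]; ring
    -- second summand
    have hψsq : (ψ r) ^ 2 ≤ 1 := by
      have h1 : 0 ≤ r / R := by positivity
      have h2 : r / R ≤ 1 := by
        rw [div_le_one hR]; exact hrR
      have h3 : (r / R) ^ (k + 1) ≤ 1 := pow_le_one₀ h1 h2
      have h4 : 0 ≤ (r / R) ^ (k + 1) := pow_nonneg h1 _
      have : 0 ≤ ψ r := by simp only [hψ_def]; linarith
      have : ψ r ≤ 1 := by simp only [hψ_def]; linarith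
      nlinarith
    have hsecond : lam * (ψ r) ^ 2 * h r ^ e ≤ lam * C ^ e := by
      calc lam * (ψ r) ^ 2 * h r ^ e ≤ lam * 1 * h r ^ e := by
            apply mul_le_mul_of_nonneg_right _ hhe0
            exact mul_le_mul_of_nonneg_left hψsq hlam.le
        _ = lam * h r ^ e := by ring
        _ ≤ lam * C ^ e := mul_le_mul_of_nonneg_left hhe hlam.le
    simp only [hF_def, hG_def]
    linarith
  -- integrability
  have hFcont : ContinuousOn F (Icc 0 R) := by
    apply ContinuousOn.add
    · exact ((hψ'cont.pow 2).continuousOn).mul (hc.pow (e + 2))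
    · exact (continuousOn_const.mul ((hψcont.pow 2).continuousOn)).mul (hc.pow e)
  have hFint : IntervalIntegrable F volume 0 R := by
    apply ContinuousOn.intervalIntegrable
    rwa [uIcc_of_le hR.le]
  have hpolyc : Continuous fun r : ℝ => r ^ (2 * k) * (R - r) ^ 2 :=
    (continuous_pow (2 * k)).mul ((continuous_const.sub continuous_id).pow 2)
  have hGcont : Continuous G := by
    rw [hG_def]
    exact (continuous_const.mul hpolyc).add continuous_const
  have hGint : IntervalIntegrable G volume 0 R := hGcont.intervalIntegrable 0 R
  have hmono : (∫ r in (0:ℝ)..R, F r) ≤ ∫ r in (0:ℝ)..R, G r :=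
    intervalIntegral.integral_mono_on hR.le hFint hGint hFG
  -- compute ∫ G
  have hpoly : ∀ r : ℝ, r ^ (2 * k) * (R - r) ^ 2
      = R ^ 2 * r ^ (2 * k) - 2 * R * r ^ (2 * k + 1) + r ^ (2 * k + 2) := by
    intro r; ring
  have hpowint : ∀ j : ℕ, (∫ r in (0:ℝ)..R, r ^ j) = R ^ (j + 1) / (j + 1) := by
    intro j
    rw [integral_pow]
    simp
  have hGval : (∫ r in (0:ℝ)..R, G r)
      = B * (R ^ 2 * (R ^ (2 * k + 1) / (2 * k + 1))
          - 2 * R * (R ^ (2 * k + 2) / (2 * k + 2))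
          + R ^ (2 * k + 3) / (2 * k + 3)) + lam * C ^ e * R := by
    have h1 : (∫ r in (0:ℝ)..R, G r)
        = (∫ r in (0:ℝ)..R, B * (r ^ (2 * k) * (R - r) ^ 2)) + ∫ r in (0:ℝ)..R, lam * C ^ e := by
      rw [hG_def]
      apply intervalIntegral.integral_add
      · exact (continuous_const.mul hpolyc).intervalIntegrable 0 R
      · exact intervalIntegrable_const
    rw [h1, intervalIntegral.integral_const, intervalIntegral.integral_const_mul]
    have h2 : (∫ r in (0:ℝ)..R, r ^ (2 * k) * (R - r) ^ 2)
        = R ^ 2 * (R ^ (2 * k + 1) / (2 * k + 1))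
          - 2 * R * (R ^ (2 * k + 2) / (2 * k + 2)) + R ^ (2 * k + 3) / (2 * k + 3) := by
      have h3 : (∫ r in (0:ℝ)..R, r ^ (2 * k) * (R - r) ^ 2)
          = ∫ r in (0:ℝ)..R,
              (R ^ 2 * r ^ (2 * k) - 2 * R * r ^ (2 * k + 1) + r ^ (2 * k + 2)) := by
        apply intervalIntegral.integral_congr
        intro r _
        exact hpoly r
      rw [h3]
      rw [intervalIntegral.integral_add, intervalIntegral.integral_sub,
        intervalIntegral.integral_const_mul, intervalIntegral.integral_const_mul,
        hpowint (2 * k), hpowint (2 * k + 1), hpowint (2 * k + 2)]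
      · push_cast; ring
      · exact (continuous_const.mul (continuous_pow _)).intervalIntegrable 0 R
      · exact (continuous_const.mul (continuous_pow _)).intervalIntegrable 0 R
      · exact ((continuous_const.mul (continuous_pow _)).sub
          (continuous_const.mul (continuous_pow _))).intervalIntegrable 0 R
      · exact (continuous_pow _).intervalIntegrable 0 R
    rw [h2]
    simp
    ring
  -- bound the main error term
  have herr : B * (R ^ 2 * (R ^ (2 * k + 1) / (2 * k + 1))
      - 2 * R * (R ^ (2 * k + 2) / (2 * k + 2)) + R ^ (2 * k + 3) / (2 * k + 3)) < δ := by
    have hval : B * (R ^ 2 * (R ^ (2 * k + 1) / (2 * k + 1))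
        - 2 * R * (R ^ (2 * k + 2) / (2 * k + 2)) + R ^ (2 * k + 3) / (2 * k + 3))
        = (C ^ e * K ^ 2 * R) * (s ^ 2 * (1 / (2 * s - 1) - 2 / (2 * s) + 1 / (2 * s + 1))) := by
      rw [hB_def]
      exact aux_val R C K k e hR s hs_def hs1
    rw [hval]
    have hfr := aux_frac s hs1
    have hnn : (0:ℝ) ≤ C ^ e * K ^ 2 * R := by positivity
    calc (C ^ e * K ^ 2 * R) * (s ^ 2 * (1 / (2 * s - 1) - 2 / (2 * s) + 1 / (2 * s + 1)))
        ≤ (C ^ e * K ^ 2 * R) * (1 / (3 * s)) := mul_le_mul_of_nonneg_left hfr hnn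
      _ < δ := by
          rw [mul_one_div, div_lt_iff₀ (by positivity)]
          linarith [hkey]
  calc (∫ r in (0:ℝ)..R, F r) ≤ ∫ r in (0:ℝ)..R, G r := hmono
    _ < C ^ e * R * lam + δ := by
        rw [hGval]
        have : lam * C ^ e * R = C ^ e * R * lam := by ring
        linarith [herr]
end

section
/- Let R > 0, λ > 0, and let h : [0,R) → ℝ be continuous with h(r) > 0 for all r ∈ [0,R) and ∫₀^R dr/h(r) = +∞. Then the infimum of ∫₀^R ( ψ'(r)²·h(r) + λ·ψ(r)²/h(r) ) dr, taken over all continuously differentiable ψ : [0,R] → ℝ with ψ(0) = 1 and ψ vanishing identically on [r₀,R] for some r₀ < R, equals √λ. -/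
open MeasureTheory Set


lemma aux_maxpow (m : ℕ) (hm : 2 ≤ m) (u : ℝ) :
    HasDerivAt (fun v : ℝ => (max v 0)^m) ((m : ℝ) * (max u 0)^(m-1)) u := by
  rcases lt_trichotomy u 0 with hu | hu | hu
  · have : max u 0 = 0 := max_eq_right hu.le
    rw [this, zero_pow (by omega), mul_zero]
    have hev : (fun v : ℝ => (max v 0)^m) =ᶠ[nhds u] fun _ => (0:ℝ) := by
      filter_upwards [Iio_mem_nhds hu] with v hv
      rw [max_eq_right (le_of_lt hv), zero_pow (by omega)]
    exact (hasDerivAt_const u (0:ℝ)).congr_of_eventuallyEq hev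
  · subst hu
    rw [hasDerivAt_iff_isLittleO]
    have hmax : max (0:ℝ) 0 = 0 := max_self 0
    simp only [hmax, zero_pow (by omega : m ≠ 0), zero_pow (by omega : m - 1 ≠ 0), mul_zero,
      smul_zero, sub_zero]
    rw [Asymptotics.isLittleO_iff]
    intro c hc
    filter_upwards [Metric.ball_mem_nhds (0:ℝ) (lt_min hc zero_lt_one)] with v hv
    simp only [Metric.mem_ball, Real.dist_eq, sub_zero] at hv
    have hv1 : |v| < 1 := hv.trans_le (min_le_right _ _)
    have hvc : |v| < c := hv.trans_le (min_le_left _ _)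
    have h1 : |max v 0| ≤ |v| := by
      rcases le_or_gt v 0 with h | h
      · rw [max_eq_right h]; simp
      · rw [max_eq_left h.le]
    calc ‖(max v 0)^m‖ = |max v 0|^m := by rw [Real.norm_eq_abs, abs_pow]
      _ ≤ |v|^m := pow_le_pow_left₀ (abs_nonneg _) h1 m
      _ ≤ |v|^2 := pow_le_pow_of_le_one (abs_nonneg _) hv1.le hm
      _ ≤ c * |v| := by rw [sq]; exact mul_le_mul hvc.le le_rfl (abs_nonneg _) hc.le
      _ = c * ‖v‖ := by rw [Real.norm_eq_abs]
  · have : max u 0 = u := max_eq_left hu.le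
    rw [this]
    have hev : (fun v : ℝ => (max v 0)^m) =ᶠ[nhds u] fun v => v^m := by
      filter_upwards [Ioi_mem_nhds hu] with v hv
      rw [max_eq_left (le_of_lt hv)]
    exact (hasDerivAt_pow m u).congr_of_eventuallyEq hev


lemma aux_lower (R lam : ℝ) (hR : 0 < R) (hlam : 0 < lam) (h : ℝ → ℝ)
    (hpos : ∀ r ∈ Set.Ico (0:ℝ) R, 0 < h r)
    (hc : ContinuousOn h (Set.Ico 0 R))
    (ψ ψ' : ℝ → ℝ)
    (hder : ∀ r ∈ Set.Icc (0:ℝ) R, HasDerivWithinAt ψ (ψ' r) (Set.Icc 0 R) r)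
    (hcψ' : ContinuousOn ψ' (Set.Icc 0 R)) (hψ0 : ψ 0 = 1)
    (r₀ : ℝ) (hr₀R : r₀ < R) (hvan : ∀ r ∈ Set.Icc r₀ R, ψ r = 0) :
    Real.sqrt lam ≤ ∫ r in (0:ℝ)..R, (ψ' r) ^ 2 * h r + lam * (ψ r) ^ 2 / h r := by
  set s := Real.sqrt lam with hs
  have hs2 : s ^ 2 = lam := Real.sq_sqrt hlam.le
  have hspos : 0 < s := Real.sqrt_pos.mpr hlam
  have hr₀pos : 0 < r₀ := by
    by_contra hcon
    push_neg at hcon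
    have := hvan 0 ⟨hcon, hR.le⟩
    rw [hψ0] at this; norm_num at this
  set r₁ := (r₀ + R) / 2 with hr₁
  have hr₀r₁ : r₀ < r₁ := by rw [hr₁]; linarith
  have hr₁R : r₁ < R := by rw [hr₁]; linarith
  have hr₁pos : 0 < r₁ := lt_trans hr₀pos hr₀r₁
  set f := fun r => (ψ' r) ^ 2 * h r + lam * (ψ r) ^ 2 / h r with hf
  have hψcont : ContinuousOn ψ (Set.Icc 0 R) := fun r hr => (hder r hr).continuousWithinAt
  -- ψ' vanishes on (r₀, R]
  have hψ'0 : ∀ r ∈ Set.Ioc r₀ R, ψ' r = 0 := by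
    intro r hr
    have hrmem : r ∈ Set.Icc (0:ℝ) R := ⟨(hr₀pos.trans hr.1).le, hr.2⟩
    have hu : UniqueDiffWithinAt ℝ (Set.Icc (0:ℝ) R) r := uniqueDiffOn_Icc hR r hrmem
    have hev : ψ =ᶠ[nhdsWithin r (Set.Icc (0:ℝ) R)] fun _ => (0:ℝ) := by
      filter_upwards [nhdsWithin_le_nhds (Ioi_mem_nhds hr.1), self_mem_nhdsWithin] with y h1 h2
      exact hvan y ⟨(le_of_lt h1), h2.2⟩
    have h0 : HasDerivWithinAt ψ 0 (Set.Icc (0:ℝ) R) r :=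
      (hasDerivWithinAt_const r (Set.Icc (0:ℝ) R) (0:ℝ)).congr_of_eventuallyEq hev
        (hvan r ⟨hr.1.le, hr.2⟩)
    exact hu.eq_deriv _ (hder r hrmem) h0
  have hsub1 : Set.Icc (0:ℝ) r₁ ⊆ Set.Ico (0:ℝ) R := fun x hx => ⟨hx.1, lt_of_le_of_lt hx.2 hr₁R⟩
  have hsub2 : Set.Icc (0:ℝ) r₁ ⊆ Set.Icc (0:ℝ) R := fun x hx => ⟨hx.1, hx.2.trans hr₁R.le⟩
  have hhne : ∀ x ∈ Set.Icc (0:ℝ) r₁, h x ≠ 0 := fun x hx => (hpos x (hsub1 hx)).ne'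
  have hcf : ContinuousOn f (Set.Icc 0 r₁) := by
    apply ContinuousOn.add
    · exact (((hcψ'.mono hsub2).pow 2).mul (hc.mono hsub1))
    · exact (continuousOn_const.mul ((hψcont.mono hsub2).pow 2)).div (hc.mono hsub1) hhne
  have hint1 : IntervalIntegrable f volume 0 r₁ := by
    apply ContinuousOn.intervalIntegrable
    rwa [Set.uIcc_of_le hr₁pos.le]
  have hEq0 : Set.EqOn f (fun _ => (0:ℝ)) (Set.uIcc r₁ R) := by
    intro x hx
    rw [Set.uIcc_of_le hr₁R.le] at hx
    have hx1 : ψ x = 0 := hvan x ⟨hr₀r₁.le.trans hx.1, hx.2⟩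
    have hx2 : ψ' x = 0 := hψ'0 x ⟨lt_of_lt_of_le hr₀r₁ hx.1, hx.2⟩
    simp [hf, hx1, hx2]
  have hEq0' : Set.EqOn f (fun _ => (0:ℝ)) (Set.Ioc r₁ R) := by
    intro x hx
    apply hEq0
    rw [Set.uIcc_of_le hr₁R.le]
    exact Set.Ioc_subset_Icc_self hx
  have hint2 : IntervalIntegrable f volume r₁ R := by
    rw [intervalIntegrable_iff_integrableOn_Ioc_of_le hr₁R.le]
    exact (integrableOn_congr_fun hEq0' measurableSet_Ioc).mpr integrableOn_zero
  have hsplit : (∫ r in (0:ℝ)..R, f r) = (∫ r in (0:ℝ)..r₁, f r) + ∫ r in r₁..R, f r :=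
    (intervalIntegral.integral_add_adjacent_intervals hint1 hint2).symm
  have hzero : (∫ r in r₁..R, f r) = 0 := by
    rw [intervalIntegral.integral_congr hEq0]; simp
  -- the comparison function
  set g := fun r => -(2 * s * (ψ r * ψ' r)) with hg
  have hg_cont : ContinuousOn g (Set.Icc 0 r₁) := by
    apply ContinuousOn.neg
    exact (continuousOn_const.mul ((hψcont.mono hsub2).mul (hcψ'.mono hsub2)))
  have hg_int : IntervalIntegrable g volume 0 r₁ := by
    apply ContinuousOn.intervalIntegrable
    rwa [Set.uIcc_of_le hr₁pos.le]
  have hcontu : ContinuousOn (fun r => -(s * ψ r ^ 2)) (Set.Icc 0 r₁) :=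
    (continuousOn_const.mul ((hψcont.mono hsub2).pow 2)).neg
  have hderivu : ∀ x ∈ Set.Ioo (0:ℝ) r₁,
      HasDerivWithinAt (fun r => -(s * ψ r ^ 2)) (g x) (Set.Ioi x) x := by
    intro x hx
    have hxIcc : x ∈ Set.Icc (0:ℝ) R := ⟨hx.1.le, (hx.2.trans hr₁R).le⟩
    have hnhds : Set.Icc (0:ℝ) R ∈ nhds x := Icc_mem_nhds hx.1 (hx.2.trans hr₁R)
    have hψx : HasDerivAt ψ (ψ' x) x := (hder x hxIcc).hasDerivAt hnhds
    have hDA : HasDerivAt (fun r => -(s * ψ r ^ 2)) (g x) x := by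
      have h2 := ((hψx.pow 2).const_mul s).neg
      refine h2.congr_deriv ?_
      rw [hg]; push_cast; ring
    exact hDA.hasDerivWithinAt
  have hFTC : (∫ r in (0:ℝ)..r₁, g r) = -(s * ψ r₁ ^ 2) - -(s * ψ 0 ^ 2) :=
    intervalIntegral.integral_eq_sub_of_hasDeriv_right_of_le (f := fun r => -(s * ψ r ^ 2))
      (f' := g) hr₁pos.le hcontu hderivu hg_int
  have hmono : (∫ r in (0:ℝ)..r₁, g r) ≤ ∫ r in (0:ℝ)..r₁, f r := by
    apply intervalIntegral.integral_mono_on hr₁pos.le hg_int hint1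
    intro x hx
    have hhx : 0 < h x := hpos x (hsub1 hx)
    rw [← sub_nonneg]
    have key : f x - g x = (ψ' x * h x + s * ψ x) ^ 2 / h x := by
      rw [hf, hg, ← hs2]
      field_simp
      ring
    rw [key]
    positivity
  have hval : (∫ r in (0:ℝ)..r₁, g r) = s := by
    rw [hFTC, hvan r₁ ⟨hr₀r₁.le, hr₁R.le⟩, hψ0]
    ring
  calc s = ∫ r in (0:ℝ)..r₁, g r := hval.symm
    _ ≤ ∫ r in (0:ℝ)..r₁, f r := hmono
    _ = (∫ r in (0:ℝ)..r₁, f r) + ∫ r in r₁..R, f r := by rw [hzero, add_zero]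
    _ = ∫ r in (0:ℝ)..R, f r := hsplit.symm


lemma aux_div (R : ℝ) (hR : 0 < R) (h : ℝ → ℝ)
    (hc : ContinuousOn h (Set.Ico 0 R))
    (hpos : ∀ r ∈ Set.Ico (0:ℝ) R, 0 < h r)
    (hdiv : ∫⁻ r in Set.Ioo (0:ℝ) R, ENNReal.ofReal (1 / h r) = ⊤)
    (M : ℝ) (hM : 0 < M) :
    ∃ b, 0 < b ∧ b < R ∧ M ≤ ∫ t in (0:ℝ)..b, 1 / h t := by
  set bn : ℕ → ℝ := fun n => R - R / (n + 2) with hbn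
  have hbn_lt : ∀ n, bn n < R := by
    intro n
    have : 0 < R / ((n:ℝ) + 2) := by positivity
    rw [hbn]; dsimp only; linarith
  have hbn_pos : ∀ n, 0 < bn n := by
    intro n
    have h1 : R / ((n:ℝ) + 2) < R := by
      apply div_lt_self hR
      have : (0:ℝ) ≤ n := Nat.cast_nonneg n
      linarith
    rw [hbn]; dsimp only; linarith
  have hmono : Monotone bn := by
    intro i j hij
    rw [hbn]; dsimp only
    have hij' : (i:ℝ) + 2 ≤ (j:ℝ) + 2 := by
      have : (i:ℝ) ≤ j := Nat.cast_le.mpr hij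
      linarith
    have : R / ((j:ℝ) + 2) ≤ R / ((i:ℝ) + 2) := by
      apply div_le_div_of_nonneg_left hR.le (by positivity) hij'
    linarith
  have hunion : (⋃ n, Set.Ioo (0:ℝ) (bn n)) = Set.Ioo 0 R := by
    ext x
    simp only [Set.mem_iUnion, Set.mem_Ioo]
    constructor
    · rintro ⟨n, h1, h2⟩; exact ⟨h1, h2.trans (hbn_lt n)⟩
    · rintro ⟨h1, h2⟩
      have hRx : 0 < R - x := by linarith
      obtain ⟨n, hn⟩ := exists_nat_gt (R / (R - x))
      refine ⟨n, h1, ?_⟩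
      have h3 : R / (R - x) < (n:ℝ) + 2 := by linarith
      have h4 : R / ((n:ℝ) + 2) < R - x := by
        rw [div_lt_iff₀ (by positivity)]
        rw [div_lt_iff₀ hRx] at h3
        linarith
      rw [hbn]; dsimp only; linarith
  set μ' := volume.withDensity (fun r => ENNReal.ofReal (1 / h r)) with hμ'
  have h1 : μ' (Set.Ioo 0 R) = ⊤ := by
    rw [hμ', withDensity_apply _ measurableSet_Ioo]; exact hdiv
  have hdir : Directed (· ⊆ ·) (fun n => Set.Ioo (0:ℝ) (bn n)) := by
    apply Monotone.directed_le
    intro i j hij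
    exact Set.Ioo_subset_Ioo le_rfl (hmono hij)
  have h2 : (⨆ n, μ' (Set.Ioo 0 (bn n))) = ⊤ := by
    rw [← hdir.measure_iUnion, hunion]; exact h1
  obtain ⟨n, hn⟩ : ∃ n, ENNReal.ofReal M < μ' (Set.Ioo 0 (bn n)) := by
    apply lt_iSup_iff.mp
    rw [h2]
    exact ENNReal.ofReal_lt_top
  refine ⟨bn n, hbn_pos n, hbn_lt n, ?_⟩
  have hIcc_sub : Set.Icc (0:ℝ) (bn n) ⊆ Set.Ico 0 R :=
    fun x hx => ⟨hx.1, lt_of_le_of_lt hx.2 (hbn_lt n)⟩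
  have hcont1h : ContinuousOn (fun t => 1 / h t) (Set.Icc 0 (bn n)) :=
    continuousOn_const.div (hc.mono hIcc_sub) (fun x hx => (hpos x (hIcc_sub hx)).ne')
  have hInt : IntegrableOn (fun t => 1 / h t) (Set.Ioo 0 (bn n)) :=
    (hcont1h.integrableOn_Icc).mono_set Set.Ioo_subset_Icc_self
  have hnn : 0 ≤ᵐ[volume.restrict (Set.Ioo 0 (bn n))] fun t => 1 / h t := by
    apply ae_restrict_of_forall_mem measurableSet_Ioo
    intro x hx
    have := hpos x ⟨hx.1.le, hx.2.trans (hbn_lt n)⟩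
    positivity
  have heq : μ' (Set.Ioo 0 (bn n)) = ENNReal.ofReal (∫ t in Set.Ioo 0 (bn n), 1 / h t) := by
    rw [hμ', withDensity_apply _ measurableSet_Ioo,
      ← ofReal_integral_eq_lintegral_ofReal hInt hnn]
  rw [heq] at hn
  have hM' : M < ∫ t in Set.Ioo 0 (bn n), 1 / h t := by
    by_contra hcon
    push_neg at hcon
    exact absurd hn (not_lt.mpr (ENNReal.ofReal_le_ofReal hcon))
  rw [intervalIntegral.integral_of_le (hbn_pos n).le, integral_Ioc_eq_integral_Ioo]
  exact hM'.le

set_option maxHeartbeats 1000000 in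
lemma aux_upper (R lam : ℝ) (hR : 0 < R) (hlam : 0 < lam) (h : ℝ → ℝ)
    (hc : ContinuousOn h (Set.Ico 0 R))
    (hpos : ∀ r ∈ Set.Ico (0:ℝ) R, 0 < h r)
    (hdiv : ∫⁻ r in Set.Ioo (0:ℝ) R, ENNReal.ofReal (1 / h r) = ⊤)
    (ε : ℝ) (hε : 0 < ε) :
    ∃ ψ ψ' : ℝ → ℝ,
      (∀ r ∈ Set.Icc (0:ℝ) R, HasDerivWithinAt ψ (ψ' r) (Set.Icc 0 R) r) ∧
      ContinuousOn ψ' (Set.Icc 0 R) ∧ ψ 0 = 1 ∧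
      (∃ r₀ < R, ∀ r ∈ Set.Icc r₀ R, ψ r = 0) ∧
      (∫ r in (0:ℝ)..R, (ψ' r) ^ 2 * h r + lam * (ψ r) ^ 2 / h r) ≤ Real.sqrt lam + ε := by
  set s := Real.sqrt lam with hs
  have hs2 : s ^ 2 = lam := Real.sq_sqrt hlam.le
  have hspos : 0 < s := Real.sqrt_pos.mpr hlam
  obtain ⟨k0, hk0⟩ := exists_nat_gt (s / ε)
  set k := k0 + 2 with hk
  have hk2 : 2 ≤ k := by omega
  have hkR : (2:ℝ) ≤ (k:ℝ) := by exact_mod_cast hk2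
  have hks : s < ε * k := by
    have h1 : s / ε < (k:ℝ) := by
      have : (k0:ℝ) ≤ (k:ℝ) := by exact_mod_cast Nat.le_add_right k0 2
      linarith
    calc s = ε * (s / ε) := by field_simp
      _ < ε * k := by exact mul_lt_mul_of_pos_left h1 hε
  set M := (k:ℝ) / s with hMdef
  have hMpos : 0 < M := by positivity
  clear_value s
  clear hk
  clear_value k
  clear_value M
  obtain ⟨b, hb0, hbR, hSbM⟩ := aux_div R hR h hc hpos hdiv M hMpos
  -- extension of h
  set H : ℝ → ℝ := fun r => h (min (max r 0) b) with hH
  have hmem : ∀ x : ℝ, min (max x 0) b ∈ Set.Ico (0:ℝ) R := fun x =>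
    ⟨le_min (le_max_right x 0) hb0.le, lt_of_le_of_lt (min_le_right _ _) hbR⟩
  have hHcont : Continuous H :=
    hc.comp_continuous ((continuous_id.max continuous_const).min continuous_const) hmem
  have hHpos : ∀ r, 0 < H r := fun r => hpos _ (hmem r)
  have hHne : ∀ r, H r ≠ 0 := fun r => (hHpos r).ne'
  have hHeq : ∀ r ∈ Set.Icc (0:ℝ) b, H r = h r := by
    intro r hr
    rw [hH]; dsimp only
    rw [max_eq_left hr.1, min_eq_left hr.2]
  have hHinv : Continuous fun r => (H r)⁻¹ := hHcont.inv₀ hHne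
  -- primitive
  set S : ℝ → ℝ := fun r => ∫ t in (0:ℝ)..r, (H t)⁻¹ with hSdef
  have hS' : ∀ r, HasDerivAt S ((H r)⁻¹) r := fun r =>
    (hHinv.integral_hasStrictDerivAt 0 r).hasDerivAt
  have hScont : Continuous S := by
    rw [continuous_iff_continuousAt]
    exact fun r => (hS' r).continuousAt
  have hSmono : Monotone S := by
    intro x y hxy
    have hadd := intervalIntegral.integral_add_adjacent_intervals
      (hHinv.intervalIntegrable (μ := volume) 0 x) (hHinv.intervalIntegrable (μ := volume) x y)
    have hnn : 0 ≤ ∫ t in x..y, (H t)⁻¹ :=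
      intervalIntegral.integral_nonneg hxy (fun u _ => (inv_nonneg).mpr (hHpos u).le)
    show S x ≤ S y
    rw [hSdef]; dsimp only
    rw [← hadd]; linarith
  have hS0 : S 0 = 0 := intervalIntegral.integral_same
  have hSb : M ≤ S b := by
    have : S b = ∫ t in (0:ℝ)..b, 1 / h t := by
      apply intervalIntegral.integral_congr
      intro t ht
      rw [Set.uIcc_of_le hb0.le] at ht
      show (H t)⁻¹ = 1 / h t
      rw [hHeq t ht, one_div]
    rw [this]; exact hSbM
  have hSgeM : ∀ r, b ≤ r → M ≤ S r := fun r hr => le_trans hSb (hSmono hr)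
  -- test function
  set u : ℝ → ℝ := fun r => 1 - S r / M with hu
  have hu' : ∀ r, HasDerivAt u (-(H r)⁻¹ / M) r := by
    intro r
    have h' := ((hS' r).div_const M).const_sub 1
    rw [show -(H r)⁻¹ / M = -((H r)⁻¹ / M) by ring]
    exact h'
  have hucont : Continuous u := continuous_const.sub (hScont.div_const M)
  have hu0 : u 0 = 1 := by rw [hu]; dsimp only; rw [hS0]; simp
  have hu_np : ∀ r, b ≤ r → max (u r) 0 = 0 := by
    intro r hr
    apply max_eq_right
    rw [hu]; dsimp only
    have h1 : 1 ≤ S r / M := (one_le_div hMpos).mpr (hSgeM r hr)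
    linarith
  set ψ : ℝ → ℝ := fun r => (max (u r) 0) ^ k with hψ
  set ψ' : ℝ → ℝ := fun r => ((k:ℝ) * (max (u r) 0) ^ (k-1)) * (-(H r)⁻¹ / M) with hψ'
  have hψder : ∀ r, HasDerivAt ψ (ψ' r) r := fun r =>
    (aux_maxpow k hk2 (u r)).comp r (hu' r)
  have hψ'cont : Continuous ψ' := by
    apply Continuous.mul
    · exact continuous_const.mul ((hucont.max continuous_const).pow (k-1))
    · exact (hHinv.neg).div_const M
  have hψ0 : ψ 0 = 1 := by rw [hψ]; dsimp only; rw [hu0]; simp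
  have hvan : ∀ r ∈ Set.Icc b R, ψ r = 0 := by
    intro r hr
    rw [hψ]; dsimp only
    rw [hu_np r hr.1, zero_pow (by omega)]
  -- antiderivative of the energy density
  have e1 : (2*(k:ℝ) - 1) ≠ 0 := by nlinarith
  have e2 : (2*(k:ℝ) + 1) ≠ 0 := by nlinarith
  set E : ℝ → ℝ := fun r =>
    -((k:ℝ)^2 / M^2) * (M / (2*(k:ℝ) - 1)) * (max (u r) 0) ^ (2*k-1)
      - lam * (M / (2*(k:ℝ) + 1)) * (max (u r) 0) ^ (2*k+1) with hE
  set W : ℝ → ℝ := fun r =>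
    ((k:ℝ)^2 / M^2 * (max (u r) 0) ^ (2*k-2) + lam * (max (u r) 0) ^ (2*k)) * (H r)⁻¹ with hW
  have hE' : ∀ r, HasDerivAt E (W r) r := by
    intro r
    have h1 := (aux_maxpow (2*k-1) (by omega) (u r)).comp r (hu' r)
    have h2 := (aux_maxpow (2*k+1) (by omega) (u r)).comp r (hu' r)
    rw [show 2*k-1-1 = 2*k-2 by omega] at h1
    rw [show 2*k+1-1 = 2*k by omega] at h2
    have h3 := (h1.const_mul (-((k:ℝ)^2 / M^2) * (M / (2*(k:ℝ) - 1)))).sub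
      (h2.const_mul (lam * (M / (2*(k:ℝ) + 1))))
    have hc1 : ((2*k-1 : ℕ) : ℝ) = 2*(k:ℝ) - 1 := by
      push_cast [Nat.cast_sub (show 1 ≤ 2*k by omega)]; ring
    have hc2 : ((2*k+1 : ℕ) : ℝ) = 2*(k:ℝ) + 1 := by push_cast; ring
    have hval : -((k:ℝ)^2 / M^2) * (M / (2*(k:ℝ) - 1)) *
          (((2*k-1 : ℕ) : ℝ) * (max (u r) 0)^(2*k-2) * (-(H r)⁻¹ / M))
        - lam * (M / (2*(k:ℝ) + 1)) *
          (((2*k+1 : ℕ) : ℝ) * (max (u r) 0)^(2*k) * (-(H r)⁻¹ / M)) = W r := by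
      rw [hc1, hc2, hW]; dsimp only
      field_simp [e1, e2, hHne r, hMpos.ne']
      have hX : ((k:ℝ)*2 - 1) / ((k:ℝ)*2 - 1) = 1 := div_self (by contrapose! e1; linarith)
      linear_combination ((k:ℝ)^2 * max (u r) 0 ^ (2 * k - 2)) * hX
    rw [hval] at h3
    exact h3
  have hWcont : Continuous W := by
    apply Continuous.mul
    · apply Continuous.add
      · exact continuous_const.mul ((hucont.max continuous_const).pow (2*k-2))
      · exact continuous_const.mul ((hucont.max continuous_const).pow (2*k))
    · exact hHinv
  -- identification of the energy density
  have hfW : Set.EqOn (fun r => (ψ' r) ^ 2 * h r + lam * (ψ r) ^ 2 / h r) W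
      (Set.uIcc 0 R) := by
    intro r hr
    rw [Set.uIcc_of_le hR.le] at hr
    dsimp only
    rcases le_or_gt r b with hrb | hrb
    · have hhr : h r = H r := (hHeq r ⟨hr.1, hrb⟩).symm
      have hHr : 0 < H r := hHpos r
      have p1 : ((max (u r) 0) ^ (k-1))^2 = (max (u r) 0) ^ (2*k-2) := by
        rw [← pow_mul]; congr 1; omega
      have p2 : ((max (u r) 0) ^ k)^2 = (max (u r) 0) ^ (2*k) := by
        rw [← pow_mul]; congr 1; omega
      rw [hhr, hψ, hψ', hW]
      dsimp only
      rw [mul_pow, mul_pow, p1, p2]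
      field_simp
    · have hm0 : max (u r) 0 = 0 := hu_np r hrb.le
      rw [hψ, hψ', hW]
      dsimp only
      rw [hm0, zero_pow (show k-1 ≠ 0 by omega), zero_pow (show k ≠ 0 by omega),
        zero_pow (show 2*k-2 ≠ 0 by omega), zero_pow (show 2*k ≠ 0 by omega)]
      simp
  -- FTC and evaluation
  have hFTC : (∫ r in (0:ℝ)..R, W r) = E R - E 0 :=
    intervalIntegral.integral_eq_sub_of_hasDerivAt (fun x _ => hE' x)
      (hWcont.intervalIntegrable 0 R)
  have hER : E R = 0 := by
    rw [hE]; dsimp only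
    rw [hu_np R hbR.le, zero_pow (show 2*k-1 ≠ 0 by omega),
      zero_pow (show 2*k+1 ≠ 0 by omega)]
    ring
  have hE0 : E 0 = -((k:ℝ)^2 / M^2) * (M / (2*(k:ℝ) - 1)) - lam * (M / (2*(k:ℝ) + 1)) := by
    rw [hE]; dsimp only
    rw [hu0]
    simp
  refine ⟨ψ, ψ', fun r _ => (hψder r).hasDerivWithinAt, hψ'cont.continuousOn, hψ0,
    ⟨b, hbR, hvan⟩, ?_⟩
  rw [intervalIntegral.integral_congr hfW, hFTC, hER, hE0]
  have hkM : (k:ℝ)^2 / M^2 = lam := by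
    rw [hMdef]
    field_simp
    nlinarith [hs2]
  rw [hkM]
  have hlamM : lam * M = s * k := by
    rw [hMdef, ← hs2]
    field_simp
  have hgoal : lam * (M / (2*(k:ℝ) - 1)) + lam * (M / (2*(k:ℝ) + 1)) ≤ s + ε := by
    clear hfW hFTC hER hE0 hE' hWcont hE hW hψder hψ'cont hψ0 hvan hu' hucont hu0 hu_np
    clear hψ hψ' hu hSb hSgeM hSmono hScont hS' hS0 hSdef hHinv hHeq hHne hHpos hHcont hH hmem
    rw [mul_div_assoc', mul_div_assoc', hlamM]
    have hden : (0:ℝ) < (2*(k:ℝ) - 1) * (2*(k:ℝ) + 1) := by nlinarith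
    rw [div_add_div _ _ e1 e2, div_le_iff₀ hden]
    have hek : ε * (k:ℝ) ≤ ε * (4*(k:ℝ)^2 - 1) := by
      apply mul_le_mul_of_nonneg_left _ hε.le
      nlinarith
    nlinarith [hspos, hks, hε, hek]
  linarith [hgoal]


set_option maxHeartbeats 1000000 in
/-- The infimum of the reduced Rayleigh energy ∫(ψ'²h + λψ²/h) over C¹ test functions
with ψ(0) = 1 vanishing near the pole equals √λ, when ∫₀^R dr/h = +∞. -/
theorem stmt_16 (R lam : ℝ) (hR : 0 < R) (hlam : 0 < lam)
    (h : ℝ → ℝ) (hc : ContinuousOn h (Set.Ico 0 R))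
    (hpos : ∀ r ∈ Set.Ico (0:ℝ) R, 0 < h r)
    (hdiv : ∫⁻ r in Set.Ioo (0:ℝ) R, ENNReal.ofReal (1 / h r) = ⊤) :
    sInf {x : ℝ | ∃ ψ ψ' : ℝ → ℝ,
        (∀ r ∈ Set.Icc (0:ℝ) R, HasDerivWithinAt ψ (ψ' r) (Set.Icc 0 R) r) ∧
        ContinuousOn ψ' (Set.Icc 0 R) ∧ ψ 0 = 1 ∧
        (∃ r₀ < R, ∀ r ∈ Set.Icc r₀ R, ψ r = 0) ∧
        x = ∫ r in (0:ℝ)..R, (ψ' r) ^ 2 * h r + lam * (ψ r) ^ 2 / h r}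
      = Real.sqrt lam := by
  set T := {x : ℝ | ∃ ψ ψ' : ℝ → ℝ,
        (∀ r ∈ Set.Icc (0:ℝ) R, HasDerivWithinAt ψ (ψ' r) (Set.Icc 0 R) r) ∧
        ContinuousOn ψ' (Set.Icc 0 R) ∧ ψ 0 = 1 ∧
        (∃ r₀ < R, ∀ r ∈ Set.Icc r₀ R, ψ r = 0) ∧
        x = ∫ r in (0:ℝ)..R, (ψ' r) ^ 2 * h r + lam * (ψ r) ^ 2 / h r} with hT
  have hlb : ∀ x ∈ T, Real.sqrt lam ≤ x := by
    rintro x ⟨ψ, ψ', hder, hco, hψ0, ⟨r₀, hr₀R, hvan⟩, rfl⟩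
    exact aux_lower R lam hR hlam h hpos hc ψ ψ' hder hco hψ0 r₀ hr₀R hvan
  have hub : ∀ ε > (0:ℝ), ∃ x ∈ T, x ≤ Real.sqrt lam + ε := by
    intro ε hε
    obtain ⟨ψ, ψ', h1, h2, h3, h4, h5⟩ := aux_upper R lam hR hlam h hc hpos hdiv ε hε
    exact ⟨_, ⟨ψ, ψ', h1, h2, h3, h4, rfl⟩, h5⟩
  have hne : T.Nonempty := by
    obtain ⟨x, hx, _⟩ := hub 1 one_pos
    exact ⟨x, hx⟩
  have hbdd : BddBelow T := ⟨Real.sqrt lam, hlb⟩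
  apply le_antisymm
  · apply le_of_forall_pos_le_add
    intro ε hε
    obtain ⟨x, hx, hle⟩ := hub ε hε
    exact (csInf_le hbdd hx).trans hle
  · exact le_csInf hne hlb
end

section
/- Let n ≥ 3 and p ≥ 0 be integers with 2p ≤ n−3, let L ≥ 1, λ ≥ 0, and let h : [0,L] → ℝ be continuous with h(r) ≥ 0 for all r ∈ [0,L] and h(r) ≥ 1−r for all r ∈ [0,1]. Then for every continuously differentiable α : [0,L] → ℝ, ∫₀^L ( α'(r)²·h(r)^{n−2p−1} + λ·α(r)²·h(r)^{n−2p−3} ) dr ≥ ∫₀^1 ( α'(r)²·(1−r)^{n−2p−1} + λ·α(r)²·(1−r)^{n−2p−3} ) dr. -/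
open MeasureTheory Set

/-- Rayleigh quotient comparison with the Euclidean unit ball (Theorem 1.6(i)):
if h ≥ 0 on [0,L] and h(r) ≥ 1-r on [0,1], with 2p ≤ n-3, the warped energy dominates
the ball energy of the same radial test function. -/
theorem stmt_19
    (n p : ℤ) (hn : 3 ≤ n) (hp : 0 ≤ p) (hpn : 2 * p ≤ n - 3)
    (L : ℝ) (hL : 1 ≤ L) (lam : ℝ) (hlam : 0 ≤ lam)
    (h : ℝ → ℝ) (hc : ContinuousOn h (Set.Icc 0 L))
    (hnn : ∀ r ∈ Set.Icc (0:ℝ) L, 0 ≤ h r)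
    (hlb : ∀ r ∈ Set.Icc (0:ℝ) 1, 1 - r ≤ h r)
    (α α' : ℝ → ℝ)
    (ader : ∀ r ∈ Set.Icc (0:ℝ) L, HasDerivWithinAt α (α' r) (Set.Icc 0 L) r)
    (acont : ContinuousOn α' (Set.Icc 0 L)) :
    (∫ r in (0:ℝ)..L,
        (α' r) ^ 2 * h r ^ (n - 2 * p - 1) + lam * (α r) ^ 2 * h r ^ (n - 2 * p - 3))
      ≥ ∫ r in (0:ℝ)..1,
          (α' r) ^ 2 * (1 - r) ^ (n - 2 * p - 1)
            + lam * (α r) ^ 2 * (1 - r) ^ (n - 2 * p - 3) := by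
  have he3 : (0:ℤ) ≤ n - 2 * p - 3 := by omega
  set k : ℕ := (n - 2 * p - 3).toNat with hk
  have hk3 : n - 2 * p - 3 = (k : ℤ) := by omega
  have hk1 : n - 2 * p - 1 = ((k + 2 : ℕ) : ℤ) := by push_cast; omega
  have hzpow : ∀ x : ℝ, x ^ (n - 2 * p - 1) = x ^ (k + 2) ∧
      x ^ (n - 2 * p - 3) = x ^ k := by
    intro x
    rw [hk1, hk3, zpow_natCast, zpow_natCast]
    exact ⟨rfl, rfl⟩
  set F : ℝ → ℝ := fun r => (α' r) ^ 2 * h r ^ (k + 2) + lam * (α r) ^ 2 * h r ^ k with hF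
  set G : ℝ → ℝ := fun r => (α' r) ^ 2 * (1 - r) ^ (k + 2) + lam * (α r) ^ 2 * (1 - r) ^ k with hG
  have heqF : ∀ r : ℝ, (α' r) ^ 2 * h r ^ (n - 2 * p - 1) + lam * (α r) ^ 2 * h r ^ (n - 2 * p - 3) = F r := by
    intro r; rw [(hzpow (h r)).1, (hzpow (h r)).2]
  have heqG : ∀ r : ℝ, (α' r) ^ 2 * (1 - r) ^ (n - 2 * p - 1) + lam * (α r) ^ 2 * (1 - r) ^ (n - 2 * p - 3) = G r := by
    intro r; rw [(hzpow (1 - r)).1, (hzpow (1 - r)).2]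
  simp only [heqF, heqG]
  have hL0 : (0:ℝ) ≤ L := le_trans zero_le_one hL
  have hacont : ContinuousOn α (Set.Icc 0 L) := fun r hr => (ader r hr).continuousWithinAt
  have hFc : ContinuousOn F (Set.Icc 0 L) := by
    apply ContinuousOn.add
    · exact (acont.pow 2).mul (hc.pow _)
    · exact (continuousOn_const.mul (hacont.pow 2)).mul (hc.pow _)
  have hGc : ContinuousOn G (Set.Icc 0 L) := by
    apply ContinuousOn.add
    · exact (acont.pow 2).mul (((continuousOn_const.sub continuousOn_id).pow _))
    · exact (continuousOn_const.mul (hacont.pow 2)).mul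
        (((continuousOn_const.sub continuousOn_id).pow _))
  have hsub1 : Set.uIcc (0:ℝ) 1 ⊆ Set.Icc 0 L := by
    rw [Set.uIcc_of_le zero_le_one]; exact Set.Icc_subset_Icc le_rfl hL
  have hsub2 : Set.uIcc (1:ℝ) L ⊆ Set.Icc 0 L := by
    rw [Set.uIcc_of_le hL]; exact Set.Icc_subset_Icc zero_le_one le_rfl
  have hFi1 : IntervalIntegrable F volume 0 1 := (hFc.mono hsub1).intervalIntegrable
  have hFi2 : IntervalIntegrable F volume 1 L := (hFc.mono hsub2).intervalIntegrable
  have hGi1 : IntervalIntegrable G volume 0 1 := (hGc.mono hsub1).intervalIntegrable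
  have hsplit : ∫ r in (0:ℝ)..L, F r = (∫ r in (0:ℝ)..1, F r) + ∫ r in (1:ℝ)..L, F r :=
    (intervalIntegral.integral_add_adjacent_intervals hFi1 hFi2).symm
  rw [hsplit]
  have hFnn : ∀ r ∈ Set.Icc (1:ℝ) L, 0 ≤ F r := by
    intro r hr
    have hr' : r ∈ Set.Icc (0:ℝ) L := ⟨le_trans zero_le_one hr.1, hr.2⟩
    have := hnn r hr'
    positivity
  have h2 : 0 ≤ ∫ r in (1:ℝ)..L, F r :=
    intervalIntegral.integral_nonneg hL (fun u hu => hFnn u hu)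
  have h1 : (∫ r in (0:ℝ)..1, G r) ≤ ∫ r in (0:ℝ)..1, F r := by
    apply intervalIntegral.integral_mono_on zero_le_one hGi1 hFi1
    intro r hr
    have hr' : r ∈ Set.Icc (0:ℝ) L := ⟨hr.1, le_trans hr.2 hL⟩
    have h1r : (0:ℝ) ≤ 1 - r := by linarith [hr.2]
    have hle : 1 - r ≤ h r := hlb r hr
    have p1 : (1 - r) ^ (k + 2) ≤ h r ^ (k + 2) := pow_le_pow_left₀ h1r hle _
    have p2 : (1 - r) ^ k ≤ h r ^ k := pow_le_pow_left₀ h1r hle _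
    have := sq_nonneg (α' r)
    have := sq_nonneg (α r)
    simp only [hF, hG]
    nlinarith [mul_le_mul_of_nonneg_left p1 (sq_nonneg (α' r)),
      mul_le_mul_of_nonneg_left p2 (mul_nonneg hlam (sq_nonneg (α r)))]
  linarith
end
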